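/- arXiv:1612.07446 — 3 statements merged into one kernel-verified Lean document; each statement's English description precedes it below -/
import Mathlib

section
/- Let H, F : ℝ → ℝ be twice continuously differentiable functions with H(x) ≥ 0, H′(x) ≥ 0, H″(x) ≥ 0 and F(x) ≥ 0, F′(x) ≥ 0, F″(x) ≥ 0 for all x ≥ 0. Let h be holomorphic on an open set U ⊆ ℂⁿ and define ρ : ℂⁿ → ℝ by ρ(z) := H(|h(z)|²)·F((Re h(z))²). Then for every z ∈ U and every w ∈ ℂⁿ, 𝓛ρ(z; w) ≥ ( H′(|h(z)|²)·F((Re h(z))²) + (1/2)·H(|h(z)|²)·F′((Re h(z))²) )·|Dh(z)w|². -/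
open Complex Metric

section Auxiliary



variable {E : Type*} [NormedAddCommGroup E] [NormedSpace ℂ E]

/-- derivative of `h` at `x` in direction `v`, as a Cauchy integral over a circle of radius r. -/
lemma dirDeriv_eq_circleIntegral {h : E → ℂ} {U : Set E} (hU : IsOpen U)
    (hh : DifferentiableOn ℂ h U) {x v : E} {r : ℝ} (hr : 0 < r)
    (hsub : ∀ τ : ℂ, ‖τ‖ ≤ r → x + τ • v ∈ U) :
    fderiv ℂ h x v =
      (2 * ↑Real.pi * I)⁻¹ • ∮ ζ in C(0, r), ((1:ℂ) / (ζ - 0)) ^ 1 • (ζ - 0)⁻¹ • h (x + ζ • v) := by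
  set g : ℂ → ℂ := fun τ => h (x + τ • v) with hg
  have hgd : DifferentiableOn ℂ g (closedBall 0 r) := by
    intro τ hτ
    have hmem : x + τ • v ∈ U := hsub τ (by simpa [Complex.norm_def] using mem_closedBall_zero_iff.mp hτ)
    exact ((hh.differentiableAt (hU.mem_nhds hmem)).comp τ
      ((differentiableAt_id.smul_const v).const_add x)).differentiableWithinAt
  have hrr : (r.toNNReal : ℝ) = r := Real.coe_toNNReal r hr.le
  have hR : (0 : NNReal) < r.toNNReal := by simpa [Real.toNNReal_pos] using hr
  have hps := (hgd.mono (by rw [hrr] )).hasFPowerSeriesOnBall (R := r.toNNReal) hR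
  have hderiv : deriv g 0 = cauchyPowerSeries g 0 (r.toNNReal) 1 fun _ => 1 :=
    hps.hasFPowerSeriesAt.deriv
  have hline : HasDerivAt (fun τ : ℂ => x + τ • v) v 0 := by
    simpa using ((hasDerivAt_id (0:ℂ)).smul_const v).const_add x
  have hgder : HasDerivAt g (fderiv ℂ h x v) 0 := by
    have hx : x + (0:ℂ) • v = x := by simp
    have hdh : HasFDerivAt h (fderiv ℂ h x) ((fun τ : ℂ => x + τ • v) 0) := by
      rw [show (fun τ : ℂ => x + τ • v) 0 = x by simp]
      exact (hh.differentiableAt (hU.mem_nhds (by simpa [hx] using hsub 0 (by simp [hr.le])))).hasFDerivAt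
    exact hdh.comp_hasDerivAt 0 hline
  have := hgder.deriv
  rw [← this, hderiv, cauchyPowerSeries_apply, hrr]

lemma dirDeriv_norm_le {h : E → ℂ} {U : Set E} (hU : IsOpen U)
    (hh : DifferentiableOn ℂ h U) {x v : E} {r M : ℝ} (hr : 0 < r)
    (hsub : ∀ τ : ℂ, ‖τ‖ ≤ r → x + τ • v ∈ U)
    (hbound : ∀ τ : ℂ, ‖τ‖ ≤ r → ‖h (x + τ • v)‖ ≤ M) :
    ‖fderiv ℂ h x v‖ ≤ M / r := by
  rw [dirDeriv_eq_circleIntegral hU hh hr hsub, norm_smul]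
  have h1 : ‖(2 * (Real.pi : ℂ) * I)⁻¹‖ = (2 * Real.pi)⁻¹ := by
    simp [norm_inv, map_mul,
      _root_.abs_of_nonneg Real.pi_nonneg]
  have h2 : ‖∮ ζ in C(0, r), ((1:ℂ) / (ζ - 0)) ^ 1 • (ζ - 0)⁻¹ • h (x + ζ • v)‖ ≤
      2 * Real.pi * r * (M / r ^ 2) := by
    apply circleIntegral.norm_integral_le_of_norm_le_const hr.le
    intro ζ hζ
    have hζr : ‖ζ‖ = r := by simpa using mem_sphere_zero_iff_norm.mp hζ
    have hb := hbound ζ (le_of_eq hζr)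
    rw [norm_smul, norm_smul]
    have : ‖((1:ℂ) / (ζ - 0)) ^ 1‖ = 1 / r := by
      simp [map_div₀, hζr]
    rw [this]
    have : ‖(ζ - 0)⁻¹‖ = 1 / r := by simp [hζr]
    rw [this]
    have hhn : (0:ℝ) ≤ 1 / r := by positivity
    calc 1 / r * (1 / r * ‖h (x + ζ • v)‖) ≤ 1 / r * (1 / r * M) := by
          apply mul_le_mul_of_nonneg_left (mul_le_mul_of_nonneg_left hb hhn) hhn
      _ = M / r ^ 2 := by field_simp
  calc ‖(2 * (Real.pi:ℂ) * I)⁻¹‖ * ‖∮ ζ in C(0, r), ((1:ℂ) / (ζ - 0)) ^ 1 • (ζ - 0)⁻¹ • h (x + ζ • v)‖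
      ≤ (2 * Real.pi)⁻¹ * (2 * Real.pi * r * (M / r ^ 2)) := by
        rw [h1]; exact mul_le_mul_of_nonneg_left h2 (by positivity)
    _ = M / r := by
        have : Real.pi ≠ 0 := Real.pi_ne_zero
        field_simp

lemma fderiv_opNorm_le {h : E → ℂ} {U : Set E} (hU : IsOpen U)
    (hh : DifferentiableOn ℂ h U) {x : E} {r M : ℝ} (hr : 0 < r) (hM : 0 ≤ M)
    (hsub : ∀ y : E, ‖y - x‖ ≤ r → y ∈ U)
    (hbound : ∀ y : E, ‖y - x‖ ≤ r → ‖h y‖ ≤ M) :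
    ‖fderiv ℂ h x‖ ≤ M / r := by
  apply ContinuousLinearMap.opNorm_le_bound _ (by positivity)
  intro v
  rcases eq_or_ne v 0 with rfl | hv
  · simp
  · have hvn : (0:ℝ) < ‖v‖ := norm_pos_iff.mpr hv
    have hρ : (0:ℝ) < r / ‖v‖ := by positivity
    have hτsub : ∀ τ : ℂ, ‖τ‖ ≤ r / ‖v‖ → x + τ • v ∈ U := by
      intro τ hτ
      apply hsub
      have : ‖x + τ • v - x‖ = ‖τ‖ * ‖v‖ := by
        simp [norm_smul]
      rw [this]
      calc ‖τ‖ * ‖v‖ ≤ r / ‖v‖ * ‖v‖ := by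
            exact mul_le_mul_of_nonneg_right hτ hvn.le
        _ = r := by field_simp
    have hτbnd : ∀ τ : ℂ, ‖τ‖ ≤ r / ‖v‖ → ‖h (x + τ • v)‖ ≤ M := by
      intro τ hτ
      apply hbound
      have : ‖x + τ • v - x‖ = ‖τ‖ * ‖v‖ := by
        simp [norm_smul]
      rw [this]
      calc ‖τ‖ * ‖v‖ ≤ r / ‖v‖ * ‖v‖ := mul_le_mul_of_nonneg_right hτ hvn.le
        _ = r := by field_simp
    have := dirDeriv_norm_le hU hh hρ hτsub hτbnd
    calc ‖fderiv ℂ h x v‖ ≤ M / (r / ‖v‖) := this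
      _ = M / r * ‖v‖ := by field_simp

set_option maxHeartbeats 1000000 in
set_option synthInstance.maxHeartbeats 400000 in
open MeasureTheory in
lemma fderiv_differentiableAt_of_differentiableOn {n : ℕ}
    {U : Set (EuclideanSpace ℂ (Fin n))} (hU : IsOpen U)
    {h : EuclideanSpace ℂ (Fin n) → ℂ} (hh : DifferentiableOn ℂ h U)
    {z : EuclideanSpace ℂ (Fin n)} (hz : z ∈ U) :
    DifferentiableAt ℂ (fun x => fderiv ℂ h x) z := by
  letI : MeasurableSpace (EuclideanSpace ℂ (Fin n)) := borel _
  haveI : BorelSpace (EuclideanSpace ℂ (Fin n)) := ⟨rfl⟩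
  obtain ⟨ε, hε0, hεU⟩ : ∃ ε > 0, closedBall z ε ⊆ U := by
    rcases nhds_basis_closedBall.mem_iff.mp (hU.mem_nhds hz) with ⟨ε, hε, hsub⟩
    exact ⟨ε, hε, hsub⟩
  set r : ℝ := ε / 4 with hrdef
  have hr : 0 < r := by positivity
  obtain ⟨M0, hM0⟩ := (isCompact_closedBall z ε).exists_bound_of_continuousOn
    (hh.continuousOn.mono hεU)
  set M : ℝ := max M0 0 with hMdef
  have hM : 0 ≤ M := le_max_right _ _
  have hMb : ∀ y ∈ closedBall z ε, ‖h y‖ ≤ M := fun y hy => (hM0 y hy).trans (le_max_left _ _)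
  have hop : ∀ y ∈ closedBall z (ε / 2), ‖fderiv ℂ h y‖ ≤ M / r := by
    intro y hy
    have hy' : dist y z ≤ ε / 2 := mem_closedBall.mp hy
    have tri : ∀ y' : EuclideanSpace ℂ (Fin n), ‖y' - y‖ ≤ r → y' ∈ closedBall z ε := by
      intro y' hy'r
      simp only [mem_closedBall]
      calc dist y' z ≤ dist y' y + dist y z := dist_triangle _ _ _
        _ ≤ r + ε / 2 := add_le_add (by simpa [dist_eq_norm] using hy'r) hy'
        _ ≤ ε := by rw [hrdef]; linarith
    exact fderiv_opNorm_le hU hh hr hM (fun y' hy'r => hεU (tri y' hy'r))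
      (fun y' hy'r => hMb y' (tri y' hy'r))
  have hhalf : closedBall z (ε / 2) ⊆ U := fun y hy =>
    hεU (closedBall_subset_closedBall (by linarith) hy)
  -- per coordinate
  have hcoord : ∀ j : Fin n,
      DifferentiableAt ℂ (fun x => fderiv ℂ h x (EuclideanSpace.single j (1:ℂ))) z := by
    intro j
    set e : EuclideanSpace ℂ (Fin n) := EuclideanSpace.single j (1:ℂ) with hedef
    have hne : ‖e‖ = 1 := by simp [hedef, EuclideanSpace.norm_single]
    have hmem : ∀ x ∈ ball z (r / 2), ∀ τ : ℂ, ‖τ‖ ≤ r →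
        x + τ • e ∈ closedBall z (ε / 2) := by
      intro x hx τ hτ
      simp only [mem_closedBall]
      calc dist (x + τ • e) z ≤ dist (x + τ • e) x + dist x z := dist_triangle _ _ _
        _ ≤ r + r / 2 := by
            apply add_le_add
            · have : dist (x + τ • e) x = ‖τ‖ * ‖e‖ := by
                simp [dist_eq_norm, norm_smul]
              rw [this, hne, mul_one]; exact hτ
            · exact (mem_ball.mp hx).le
        _ ≤ ε / 2 := by rw [hrdef]; linarith
    -- circle parametrization
    set μ : Measure ℝ := volume.restrict (Set.Ioc 0 (2 * Real.pi)) with hμdef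
    set F : EuclideanSpace ℂ (Fin n) → ℝ → ℂ := fun x θ =>
      deriv (circleMap 0 r) θ •
        (((1:ℂ) / (circleMap 0 r θ - 0)) ^ 1 • ((circleMap 0 r θ - 0)⁻¹ • h (x + circleMap 0 r θ • e)))
      with hFdef
    set F' : EuclideanSpace ℂ (Fin n) → ℝ → (EuclideanSpace ℂ (Fin n) →L[ℂ] ℂ) := fun x θ =>
      deriv (circleMap 0 r) θ •
        (((1:ℂ) / (circleMap 0 r θ - 0)) ^ 1 • ((circleMap 0 r θ - 0)⁻¹ •
          (fderiv ℂ h (x + circleMap 0 r θ • e)))) with hF'def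
    have hcm_ne : ∀ θ : ℝ, circleMap 0 r θ ≠ 0 := fun θ => circleMap_ne_center hr.ne' 
    have hcm_abs : ∀ θ : ℝ, ‖circleMap 0 r θ‖ = r := by
      intro θ; simpa [_root_.abs_of_nonneg hr.le] using norm_circleMap_zero r θ
    have hcm_mem : ∀ x ∈ ball z (r / 2), ∀ θ : ℝ, x + circleMap 0 r θ • e ∈ U := by
      intro x hx θ
      exact hhalf (hmem x hx (circleMap 0 r θ) (le_of_eq (hcm_abs θ)))
    have hballz : ball z (r / 2) ∈ nhds z := ball_mem_nhds z (by positivity)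
    -- differentiation under the integral sign
    have main : HasFDerivAt (fun x => ∫ θ, F x θ ∂μ) (∫ θ, F' z θ ∂μ) z := by
      apply hasFDerivAt_integral_of_dominated_of_fderiv_le (s := ball z (r / 2))
        (bound := fun _ => (1 / r) * (M / r)) hballz
      · -- measurability of F x for x near z
        filter_upwards [hballz] with x hx
        apply Continuous.aestronglyMeasurable
        have hc1 : Continuous fun θ : ℝ => h (x + circleMap 0 r θ • e) := by
          apply (hh.continuousOn.mono hhalf).comp_continuous
          · exact continuous_const.add ((continuous_circleMap 0 r).smul continuous_const)
          · intro θ; exact hmem x hx _ (le_of_eq (hcm_abs θ))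
        have hc2 : Continuous fun θ : ℝ => deriv (circleMap 0 r) θ := by
          simp only [deriv_circleMap]
          exact (continuous_circleMap 0 r).mul continuous_const
        have hc3 : Continuous fun θ : ℝ => ((1:ℂ) / (circleMap 0 r θ - 0)) ^ 1 := by
          apply Continuous.pow
          apply continuous_const.div
          · exact (continuous_circleMap 0 r).sub continuous_const
          · intro θ; simpa using hcm_ne θ
        have hc4 : Continuous fun θ : ℝ => (circleMap 0 r θ - 0)⁻¹ := by
          apply Continuous.inv₀
          · exact (continuous_circleMap 0 r).sub continuous_const
          · intro θ; simpa using hcm_ne θ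
        exact hc2.smul (hc3.smul (hc4.smul hc1))
      · -- integrability of F z
        apply Continuous.integrableOn_Ioc
        have hc1 : Continuous fun θ : ℝ => h (z + circleMap 0 r θ • e) := by
          apply (hh.continuousOn.mono hhalf).comp_continuous
          · exact continuous_const.add ((continuous_circleMap 0 r).smul continuous_const)
          · intro θ
            exact hmem z (mem_ball_self (by positivity)) _ (le_of_eq (hcm_abs θ))
        have hc2 : Continuous fun θ : ℝ => deriv (circleMap 0 r) θ := by
          simp only [deriv_circleMap]
          exact (continuous_circleMap 0 r).mul continuous_const
        have hc3 : Continuous fun θ : ℝ => ((1:ℂ) / (circleMap 0 r θ - 0)) ^ 1 := by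
          apply Continuous.pow
          exact continuous_const.div ((continuous_circleMap 0 r).sub continuous_const)
            (fun θ => by simpa using hcm_ne θ)
        have hc4 : Continuous fun θ : ℝ => (circleMap 0 r θ - 0)⁻¹ :=
          Continuous.inv₀ ((continuous_circleMap 0 r).sub continuous_const)
            (fun θ => by simpa using hcm_ne θ)
        exact hc2.smul (hc3.smul (hc4.smul hc1))
      · -- measurability of F' z
        show AEStronglyMeasurable (fun θ : ℝ => deriv (circleMap 0 r) θ •
          (((1:ℂ) / (circleMap 0 r θ - 0)) ^ 1 • ((circleMap 0 r θ - 0)⁻¹ •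
            fderiv ℂ h (z + circleMap 0 r θ • e)))) μ
        apply AEStronglyMeasurable.fun_smul
        · refine Continuous.aestronglyMeasurable ?_
          have : deriv (circleMap 0 r) = fun θ => circleMap 0 r θ * I :=
            funext (deriv_circleMap 0 r)
          rw [this]
          exact (continuous_circleMap 0 r).mul continuous_const
        apply AEStronglyMeasurable.fun_smul
        · exact Continuous.aestronglyMeasurable (Continuous.pow (continuous_const.div
            ((continuous_circleMap 0 r).sub continuous_const)
            (fun θ => by simpa using hcm_ne θ)) 1)
        apply AEStronglyMeasurable.fun_smul
        · exact Continuous.aestronglyMeasurable (Continuous.inv₀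
            ((continuous_circleMap 0 r).sub continuous_const)
            (fun θ => by simpa using hcm_ne θ))
        · apply Measurable.aestronglyMeasurable
          exact (measurable_fderiv ℂ h).comp
            (measurable_const.add ((continuous_circleMap 0 r).measurable.smul measurable_const))
      · -- bound
        apply Filter.Eventually.of_forall
        intro θ x hx
        have hxball : x ∈ ball z (r / 2) := hx
        have hy : x + circleMap 0 r θ • e ∈ closedBall z (ε / 2) :=
          hmem x hxball _ (le_of_eq (hcm_abs θ))
        show ‖deriv (circleMap 0 r) θ • (((1:ℂ) / (circleMap 0 r θ - 0)) ^ 1 •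
          ((circleMap 0 r θ - 0)⁻¹ • fderiv ℂ h (x + circleMap 0 r θ • e)))‖ ≤ 1 / r * (M / r)
        rw [norm_smul, norm_smul, norm_smul]
        have e1 : ‖deriv (circleMap 0 r) θ‖ = r := by
          simp [deriv_circleMap, map_mul, hcm_abs θ]
        have e2 : ‖((1:ℂ) / (circleMap 0 r θ - 0)) ^ 1‖ = 1 / r := by
          simp [map_div₀, hcm_abs θ]
        have e3 : ‖(circleMap 0 r θ - 0)⁻¹‖ = 1 / r := by
          simp [hcm_abs θ]
        rw [e1, e2, e3]
        have := hop _ hy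
        calc r * (1 / r * (1 / r * ‖fderiv ℂ h (x + circleMap 0 r θ • e)‖))
            ≤ r * (1 / r * (1 / r * (M / r))) := by
              apply mul_le_mul_of_nonneg_left
              apply mul_le_mul_of_nonneg_left
              apply mul_le_mul_of_nonneg_left this
              all_goals positivity
          _ = 1 / r * (M / r) := by field_simp
      · -- integrable bound
        exact integrableOn_const measure_Ioc_lt_top.ne
      · -- differentiability in x
        apply Filter.Eventually.of_forall
        intro θ x hx
        have hy : x + circleMap 0 r θ • e ∈ U := hcm_mem x hx θ
        have hdh : HasFDerivAt h (fderiv ℂ h (x + circleMap 0 r θ • e))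
            (x + circleMap 0 r θ • e) :=
          (hh.differentiableAt (hU.mem_nhds hy)).hasFDerivAt
        have htr : HasFDerivAt (fun x : EuclideanSpace ℂ (Fin n) => x + circleMap 0 r θ • e)
            (ContinuousLinearMap.id ℂ _) x := (hasFDerivAt_id x).add_const _
        have hcomp : HasFDerivAt (fun x => h (x + circleMap 0 r θ • e))
            (fderiv ℂ h (x + circleMap 0 r θ • e)) x := by
          simpa [Function.comp_def] using hdh.comp x htr
        exact (((hcomp.const_smul ((circleMap 0 r θ - 0)⁻¹)).const_smul
          (((1:ℂ) / (circleMap 0 r θ - 0)) ^ 1)).const_smul (deriv (circleMap 0 r) θ))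
    -- identify with the Cauchy integral
    have hInt_eq : ∀ x,
        (∮ ζ in C(0, r), ((1:ℂ) / (ζ - 0)) ^ 1 • (ζ - 0)⁻¹ • h (x + ζ • e)) = ∫ θ, F x θ ∂μ := by
      intro x
      rw [circleIntegral, intervalIntegral.integral_of_le (by positivity)]
    have hdiffInt : DifferentiableAt ℂ
        (fun x => (2 * ↑Real.pi * I)⁻¹ •
          ∮ ζ in C(0, r), ((1:ℂ) / (ζ - 0)) ^ 1 • (ζ - 0)⁻¹ • h (x + ζ • e)) z := by
      apply DifferentiableAt.fun_const_smul
      have : DifferentiableAt ℂ (fun x => ∫ θ, F x θ ∂μ) z := main.differentiableAt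
      exact this.congr_of_eventuallyEq (Filter.eventually_of_mem hballz
        (fun x _ => hInt_eq x))
    have heq : (fun x => fderiv ℂ h x e) =ᶠ[nhds z]
        (fun x => (2 * ↑Real.pi * I)⁻¹ •
          ∮ ζ in C(0, r), ((1:ℂ) / (ζ - 0)) ^ 1 • (ζ - 0)⁻¹ • h (x + ζ • e)) := by
      apply Filter.eventually_of_mem hballz
      intro x hx
      exact dirDeriv_eq_circleIntegral hU hh hr
        (fun τ hτ => hhalf (hmem x hx τ hτ))
    exact hdiffInt.congr_of_eventuallyEq heq
  -- assemble the full derivative from coordinates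
  have hdecomp : (fun x => fderiv ℂ h x) = fun x => ∑ j : Fin n,
      (fderiv ℂ h x (EuclideanSpace.single j (1:ℂ))) • (EuclideanSpace.proj (𝕜 := ℂ) j) := by
    funext x
    apply ContinuousLinearMap.ext
    intro v
    have hv : v = ∑ j : Fin n, v j • EuclideanSpace.single j (1:ℂ) := by
      ext i
      rw [show (∑ j : Fin n, v j • EuclideanSpace.single j (1:ℂ)) i
          = ∑ j : Fin n, (v j • EuclideanSpace.single j (1:ℂ)) i from by rw [WithLp.ofLp_sum]; exact Finset.sum_apply i _ _]
      simp [EuclideanSpace.single_apply]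
    rw [ContinuousLinearMap.sum_apply]
    conv_lhs => rw [hv]
    rw [map_sum]
    congr 1
    funext j
    simp [PiLp.proj_apply, smul_eq_mul, mul_comm]
  rw [hdecomp]
  apply DifferentiableAt.fun_sum
  intro j _
  exact (hcoord j).smul_const _


variable {E : Type*} [NormedAddCommGroup E] [NormedSpace ℝ E]

/-- second derivative along a line equals the bilinear second derivative applied twice -/
lemma secondDeriv_line {φ : E → ℝ} {z : E}
    (h1 : ∀ᶠ x in nhds z, DifferentiableAt ℝ φ x)
    (h2 : DifferentiableAt ℝ (fderiv ℝ φ) z) (v : E) :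
    fderiv ℝ (fderiv ℝ φ) z v v = deriv (deriv (fun t : ℝ => φ (z + t • v))) 0 := by
  have hL : ∀ t : ℝ, HasDerivAt (fun t : ℝ => z + t • v) v t := by
    intro t
    simpa using ((hasDerivAt_id t).smul_const v).const_add z
  have hL0 : (fun t : ℝ => z + t • v) 0 = z := by simp
  have hcont : Continuous fun t : ℝ => z + t • v := by continuity
  have hev : ∀ᶠ t in nhds (0:ℝ), DifferentiableAt ℝ φ (z + t • v) := by
    have htend : Filter.Tendsto (fun t : ℝ => z + t • v) (nhds 0) (nhds z) := by
      have := hcont.continuousAt (x := (0:ℝ))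
      simpa [ContinuousAt] using this
    exact htend.eventually h1
  have hg : ∀ᶠ t in nhds (0:ℝ),
      HasDerivAt (fun t : ℝ => φ (z + t • v)) (fderiv ℝ φ (z + t • v) v) t := by
    filter_upwards [hev] with t ht
    exact ht.hasFDerivAt.comp_hasDerivAt t (hL t)
  have heq : deriv (fun t : ℝ => φ (z + t • v)) =ᶠ[nhds (0:ℝ)]
      fun t => fderiv ℝ φ (z + t • v) v := by
    filter_upwards [hg] with t ht using ht.deriv
  have hd2 : HasDerivAt (fun t : ℝ => fderiv ℝ φ (z + t • v) v)
      (fderiv ℝ (fderiv ℝ φ) z v v) 0 := by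
    have hΦ : HasFDerivAt (fun T : E →L[ℝ] ℝ => T v)
        (ContinuousLinearMap.apply ℝ ℝ v) (fderiv ℝ φ (z + (0:ℝ) • v)) :=
      (ContinuousLinearMap.apply ℝ ℝ v).hasFDerivAt
    have h2' : HasFDerivAt (fderiv ℝ φ) (fderiv ℝ (fderiv ℝ φ) z)
        ((fun t : ℝ => z + t • v) 0) := by simpa using h2.hasFDerivAt
    have hin : HasDerivAt (fun t : ℝ => fderiv ℝ φ (z + t • v))
        (fderiv ℝ (fderiv ℝ φ) z v) 0 := by
      simpa [Function.comp_def] using h2'.comp_hasDerivAt 0 (hL 0)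
    simpa [Function.comp_def] using (ContinuousLinearMap.apply ℝ ℝ v).hasFDerivAt.comp_hasDerivAt 0 hin
  rw [heq.deriv_eq]
  exact hd2.deriv.symm

/-- 1-dimensional second-derivative computation for `t ↦ H(u t² + s t²) * F(u t²)`. -/
lemma oneDim (H F : ℝ → ℝ) (hH : ContDiff ℝ 2 H) (hF : ContDiff ℝ 2 F)
    (u s du ds : ℝ → ℝ) (u2 s2 : ℝ)
    (hu : ∀ᶠ t in nhds (0:ℝ), HasDerivAt u (du t) t)
    (hs : ∀ᶠ t in nhds (0:ℝ), HasDerivAt s (ds t) t)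
    (hdu : HasDerivAt du u2 0) (hds : HasDerivAt ds s2 0) :
    deriv (deriv (fun t => H (u t ^ 2 + s t ^ 2) * F (u t ^ 2))) 0 =
      (deriv (deriv H) (u 0 ^ 2 + s 0 ^ 2) * (2 * u 0 * du 0 + 2 * s 0 * ds 0) ^ 2
        + deriv H (u 0 ^ 2 + s 0 ^ 2) *
            (2 * du 0 ^ 2 + 2 * u 0 * u2 + 2 * ds 0 ^ 2 + 2 * s 0 * s2)) * F (u 0 ^ 2)
      + 2 * (deriv H (u 0 ^ 2 + s 0 ^ 2) * (2 * u 0 * du 0 + 2 * s 0 * ds 0) *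
            (deriv F (u 0 ^ 2) * (2 * u 0 * du 0)))
      + H (u 0 ^ 2 + s 0 ^ 2) * (deriv (deriv F) (u 0 ^ 2) * (2 * u 0 * du 0) ^ 2
            + deriv F (u 0 ^ 2) * (2 * du 0 ^ 2 + 2 * u 0 * u2)) := by
  have hHd : Differentiable ℝ H := hH.differentiable two_ne_zero
  have hFd : Differentiable ℝ F := hF.differentiable two_ne_zero
  have hH' : Differentiable ℝ (deriv H) := by
    have : ContDiff ℝ ((1:ℕ∞) + 1) H := by exact_mod_cast hH
    exact ((contDiff_succ_iff_deriv.mp this).2.2).differentiable (by simp)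
  have hF' : Differentiable ℝ (deriv F) := by
    have : ContDiff ℝ ((1:ℕ∞) + 1) F := by exact_mod_cast hF
    exact ((contDiff_succ_iff_deriv.mp this).2.2).differentiable (by simp)
  set g' : ℝ → ℝ := fun t => deriv H (u t ^ 2 + s t ^ 2) * (2 * u t * du t + 2 * s t * ds t) *
      F (u t ^ 2) + H (u t ^ 2 + s t ^ 2) * (deriv F (u t ^ 2) * (2 * u t * du t)) with hg'def
  have hg : ∀ᶠ t in nhds (0:ℝ),
      HasDerivAt (fun t => H (u t ^ 2 + s t ^ 2) * F (u t ^ 2)) (g' t) t := by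
    filter_upwards [hu, hs] with t hut hst
    have hq : HasDerivAt (fun t => u t ^ 2 + s t ^ 2) (2 * u t * du t + 2 * s t * ds t) t := by
      have := (hut.pow 2).add (hst.pow 2)
      refine this.congr_deriv ?_
      push_cast
      ring
    have hm : HasDerivAt (fun t => u t ^ 2) (2 * u t * du t) t := by
      have := hut.pow 2
      refine this.congr_deriv ?_
      push_cast
      ring
    have hHq : HasDerivAt (fun t => H (u t ^ 2 + s t ^ 2))
        (deriv H (u t ^ 2 + s t ^ 2) * (2 * u t * du t + 2 * s t * ds t)) t :=
      (hHd _).hasDerivAt.comp t hq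
    have hFm : HasDerivAt (fun t => F (u t ^ 2)) (deriv F (u t ^ 2) * (2 * u t * du t)) t :=
      (hFd _).hasDerivAt.comp t hm
    exact hHq.mul hFm
  have hu0 : HasDerivAt u (du 0) 0 := hu.self_of_nhds
  have hs0 : HasDerivAt s (ds 0) 0 := hs.self_of_nhds
  have hq0 : HasDerivAt (fun t => u t ^ 2 + s t ^ 2) (2 * u 0 * du 0 + 2 * s 0 * ds 0) 0 := by
    have := (hu0.pow 2).add (hs0.pow 2)
    refine this.congr_deriv ?_
    push_cast
    ring
  have hm0 : HasDerivAt (fun t => u t ^ 2) (2 * u 0 * du 0) 0 := by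
    have := hu0.pow 2
    refine this.congr_deriv ?_
    push_cast
    ring
  have hT1 : HasDerivAt (fun t => deriv H (u t ^ 2 + s t ^ 2))
      (deriv (deriv H) (u 0 ^ 2 + s 0 ^ 2) * (2 * u 0 * du 0 + 2 * s 0 * ds 0)) 0 :=
    (hH' _).hasDerivAt.comp 0 hq0
  have hT2 : HasDerivAt (fun t => 2 * u t * du t + 2 * s t * ds t)
      (2 * du 0 ^ 2 + 2 * u 0 * u2 + 2 * ds 0 ^ 2 + 2 * s 0 * s2) 0 := by
    have := ((hu0.const_mul 2).mul hdu).add ((hs0.const_mul 2).mul hds)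
    refine this.congr_deriv ?_
    ring
  have hT3 : HasDerivAt (fun t => F (u t ^ 2)) (deriv F (u 0 ^ 2) * (2 * u 0 * du 0)) 0 :=
    (hFd _).hasDerivAt.comp 0 hm0
  have hT4 : HasDerivAt (fun t => H (u t ^ 2 + s t ^ 2))
      (deriv H (u 0 ^ 2 + s 0 ^ 2) * (2 * u 0 * du 0 + 2 * s 0 * ds 0)) 0 :=
    (hHd _).hasDerivAt.comp 0 hq0
  have hT5 : HasDerivAt (fun t => deriv F (u t ^ 2))
      (deriv (deriv F) (u 0 ^ 2) * (2 * u 0 * du 0)) 0 :=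
    (hF' _).hasDerivAt.comp 0 hm0
  have hT6 : HasDerivAt (fun t => 2 * u t * du t) (2 * du 0 ^ 2 + 2 * u 0 * u2) 0 := by
    have := (hu0.const_mul 2).mul hdu
    refine this.congr_deriv ?_
    ring
  have hg'0 : HasDerivAt g' ((deriv (deriv H) (u 0 ^ 2 + s 0 ^ 2) *
      (2 * u 0 * du 0 + 2 * s 0 * ds 0) ^ 2
        + deriv H (u 0 ^ 2 + s 0 ^ 2) *
            (2 * du 0 ^ 2 + 2 * u 0 * u2 + 2 * ds 0 ^ 2 + 2 * s 0 * s2)) * F (u 0 ^ 2)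
      + 2 * (deriv H (u 0 ^ 2 + s 0 ^ 2) * (2 * u 0 * du 0 + 2 * s 0 * ds 0) *
            (deriv F (u 0 ^ 2) * (2 * u 0 * du 0)))
      + H (u 0 ^ 2 + s 0 ^ 2) * (deriv (deriv F) (u 0 ^ 2) * (2 * u 0 * du 0) ^ 2
            + deriv F (u 0 ^ 2) * (2 * du 0 ^ 2 + 2 * u 0 * u2))) 0 := by
    have := ((hT1.fun_mul hT2).fun_mul hT3).fun_add (hT4.fun_mul (hT5.fun_mul hT6))
    refine this.congr_deriv ?_
    ring
  have heq : deriv (fun t => H (u t ^ 2 + s t ^ 2) * F (u t ^ 2)) =ᶠ[nhds (0:ℝ)] g' := by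
    filter_upwards [hg] with t ht using ht.deriv
  rw [heq.deriv_eq]
  exact hg'0.deriv

lemma line_data {n : ℕ} {U : Set (EuclideanSpace ℂ (Fin n))} (hU : IsOpen U)
    {h : EuclideanSpace ℂ (Fin n) → ℂ} (hh : DifferentiableOn ℂ h U)
    {z : EuclideanSpace ℂ (Fin n)} (hz : z ∈ U) (v : EuclideanSpace ℂ (Fin n)) :
    (∀ᶠ t in nhds (0:ℝ), HasDerivAt (fun t : ℝ => (h (z + t • v)).re)
        ((fderiv ℂ h (z + t • v) v).re) t)
    ∧ (∀ᶠ t in nhds (0:ℝ), HasDerivAt (fun t : ℝ => (h (z + t • v)).im)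
        ((fderiv ℂ h (z + t • v) v).im) t)
    ∧ HasDerivAt (fun t : ℝ => (fderiv ℂ h (z + t • v) v).re)
        (((fderiv ℂ (fderiv ℂ h) z v) v).re) 0
    ∧ HasDerivAt (fun t : ℝ => (fderiv ℂ h (z + t • v) v).im)
        (((fderiv ℂ (fderiv ℂ h) z v) v).im) 0 := by
  have hL : ∀ t : ℝ, HasDerivAt (fun t : ℝ => z + t • v) v t := by
    intro t
    simpa using ((hasDerivAt_id t).smul_const v).const_add z
  have hL0 : (fun t : ℝ => z + t • v) 0 = z := by simp
  have hcont : Continuous fun t : ℝ => z + t • v := by continuity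
  have hevU : ∀ᶠ t in nhds (0:ℝ), z + t • v ∈ U := by
    have htend : Filter.Tendsto (fun t : ℝ => z + t • v) (nhds 0) (nhds z) := by
      have := hcont.continuousAt (x := (0:ℝ))
      simpa [ContinuousAt] using this
    exact htend.eventually (hU.mem_nhds hz)
  have hk : ∀ᶠ t in nhds (0:ℝ),
      HasDerivAt (fun t : ℝ => h (z + t • v)) (fderiv ℂ h (z + t • v) v) t := by
    filter_upwards [hevU] with t ht
    have hd : HasFDerivAt h ((fderiv ℂ h (z + t • v)).restrictScalars ℝ)
        ((fun t : ℝ => z + t • v) t) :=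
      ((hh.differentiableAt (hU.mem_nhds ht)).hasFDerivAt).restrictScalars ℝ
    simpa [Function.comp_def] using hd.comp_hasDerivAt t (hL t)
  refine ⟨?_, ?_, ?_, ?_⟩
  · filter_upwards [hk] with t ht
    simpa [Function.comp_def] using Complex.reCLM.hasFDerivAt.comp_hasDerivAt t ht
  · filter_upwards [hk] with t ht
    simpa [Function.comp_def] using Complex.imCLM.hasFDerivAt.comp_hasDerivAt t ht
  · -- second derivative, re part
    have hBd := fderiv_differentiableAt_of_differentiableOn hU hh hz
    have hB' : HasFDerivAt (fun x => fderiv ℂ h x)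
        ((fderiv ℂ (fun x => fderiv ℂ h x) z).restrictScalars ℝ)
        ((fun t : ℝ => z + t • v) 0) := by
      rw [hL0]; exact hBd.hasFDerivAt.restrictScalars ℝ
    have hBv : HasDerivAt (fun t : ℝ => fderiv ℂ h (z + t • v))
        ((fderiv ℂ (fun x => fderiv ℂ h x) z) v) 0 := by
      simpa [Function.comp_def] using hB'.comp_hasDerivAt 0 (hL 0)
    set Φ : (EuclideanSpace ℂ (Fin n) →L[ℂ] ℂ) →L[ℝ] ℝ :=
      Complex.reCLM.comp ((ContinuousLinearMap.apply ℂ ℂ v).restrictScalars ℝ) with hΦdef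
    have := Φ.hasFDerivAt.comp_hasDerivAt 0 hBv
    simpa [hΦdef, Function.comp_def] using this
  · have hBd := fderiv_differentiableAt_of_differentiableOn hU hh hz
    have hB' : HasFDerivAt (fun x => fderiv ℂ h x)
        ((fderiv ℂ (fun x => fderiv ℂ h x) z).restrictScalars ℝ)
        ((fun t : ℝ => z + t • v) 0) := by
      rw [hL0]; exact hBd.hasFDerivAt.restrictScalars ℝ
    have hBv : HasDerivAt (fun t : ℝ => fderiv ℂ h (z + t • v))
        ((fderiv ℂ (fun x => fderiv ℂ h x) z) v) 0 := by
      simpa [Function.comp_def] using hB'.comp_hasDerivAt 0 (hL 0)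
    set Φ : (EuclideanSpace ℂ (Fin n) →L[ℂ] ℂ) →L[ℝ] ℝ :=
      Complex.imCLM.comp ((ContinuousLinearMap.apply ℂ ℂ v).restrictScalars ℝ) with hΦdef
    have := Φ.hasFDerivAt.comp_hasDerivAt 0 hBv
    simpa [hΦdef, Function.comp_def] using this


end Auxiliary

/-- The Levi form of a twice real-differentiable real-valued function `φ` on `ℂⁿ`
at `z` in direction `w`: `𝓛φ(z; w) = (1/4) (D²φ(z)[w,w] + D²φ(z)[iw,iw])`, where
`D²φ(z)` is the second Fréchet derivative of `φ` over `ℝ`. -/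
noncomputable def leviForm {n : ℕ} (φ : EuclideanSpace ℂ (Fin n) → ℝ)
    (z w : EuclideanSpace ℂ (Fin n)) : ℝ :=
  (1 / 4) * (iteratedFDeriv ℝ 2 φ z ![w, w] +
    iteratedFDeriv ℝ 2 φ z ![Complex.I • w, Complex.I • w])

set_option maxHeartbeats 2000000 in
/-- Let `H, F : ℝ → ℝ` be `C²` with `H, H', H'' ≥ 0` and `F, F', F'' ≥ 0` on `[0,∞)`,
let `h` be holomorphic on an open `U ⊆ ℂⁿ`, and set `ρ(z) = H(|h z|²) F((Re h z)²)`.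
Then for `z ∈ U` and `w ∈ ℂⁿ`,
`𝓛ρ(z; w) ≥ (H'(|h z|²) F((Re h z)²) + (1/2) H(|h z|²) F'((Re h z)²)) |Dh(z)w|²`. -/
theorem leviForm_model_lower_bound {n : ℕ}
    (H F : ℝ → ℝ) (hH : ContDiff ℝ 2 H) (hF : ContDiff ℝ 2 F)
    (hH0 : ∀ x : ℝ, 0 ≤ x → 0 ≤ H x)
    (hH1 : ∀ x : ℝ, 0 ≤ x → 0 ≤ deriv H x)
    (hH2 : ∀ x : ℝ, 0 ≤ x → 0 ≤ deriv (deriv H) x)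
    (hF0 : ∀ x : ℝ, 0 ≤ x → 0 ≤ F x)
    (hF1 : ∀ x : ℝ, 0 ≤ x → 0 ≤ deriv F x)
    (hF2 : ∀ x : ℝ, 0 ≤ x → 0 ≤ deriv (deriv F) x)
    {U : Set (EuclideanSpace ℂ (Fin n))} (hU : IsOpen U)
    {h : EuclideanSpace ℂ (Fin n) → ℂ} (hh : DifferentiableOn ℂ h U)
    {z : EuclideanSpace ℂ (Fin n)} (hz : z ∈ U) (w : EuclideanSpace ℂ (Fin n)) :
    leviForm (fun ζ => H (‖h ζ‖ ^ 2) * F ((h ζ).re ^ 2)) z w ≥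
      (deriv H (‖h z‖ ^ 2) * F ((h z).re ^ 2) +
        (1 / 2) * H (‖h z‖ ^ 2) * deriv F ((h z).re ^ 2)) *
        ‖fderiv ℂ h z w‖ ^ 2 := by
  have habs : ∀ ζ : ℂ, ‖ζ‖ ^ 2 = ζ.re ^ 2 + ζ.im ^ 2 := fun ζ => by
    rw [Complex.sq_norm, Complex.normSq_apply]; ring
  simp only [habs]
  -- the C² auxiliary function on ℂ
  set G : ℂ → ℝ := fun ζ => H (ζ.re ^ 2 + ζ.im ^ 2) * F (ζ.re ^ 2) with hGdef
  have hre : ContDiff ℝ 2 fun ζ : ℂ => ζ.re := Complex.reCLM.contDiff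
  have him : ContDiff ℝ 2 fun ζ : ℂ => ζ.im := Complex.imCLM.contDiff
  have hG : ContDiff ℝ 2 G := ((hH.comp ((hre.pow 2).add (him.pow 2)))).mul
    (hF.comp (hre.pow 2))
  have hGd : Differentiable ℝ G := hG.differentiable two_ne_zero
  have hGd1 : Differentiable ℝ (fderiv ℝ G) := by
    have : ContDiff ℝ ((1:ℕ∞) + 1) G := by exact_mod_cast hG
    exact ((contDiff_succ_iff_fderiv.mp this).2.2).differentiable (by simp)
  -- differentiability data for φ
  set φ : EuclideanSpace ℂ (Fin n) → ℝ :=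
    fun ζ => H ((h ζ).re ^ 2 + (h ζ).im ^ 2) * F ((h ζ).re ^ 2) with hφdef
  have hφG : φ = fun ζ => G (h ζ) := rfl
  have h1 : ∀ᶠ x in nhds z, DifferentiableAt ℝ φ x := by
    filter_upwards [hU.mem_nhds hz] with x hx
    have hhx : DifferentiableAt ℝ h x :=
      (hh.differentiableAt (hU.mem_nhds hx)).restrictScalars ℝ
    exact (hGd (h x)).comp x hhx
  have hBd : DifferentiableAt ℂ (fun x => fderiv ℂ h x) z :=
    fderiv_differentiableAt_of_differentiableOn hU hh hz
  have h2 : DifferentiableAt ℝ (fderiv ℝ φ) z := by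
    set Ψ : EuclideanSpace ℂ (Fin n) → (EuclideanSpace ℂ (Fin n) →L[ℝ] ℝ) :=
      fun x => (fderiv ℝ G (h x)).comp ((fderiv ℂ h x).restrictScalars ℝ) with hΨdef
    have heq : fderiv ℝ φ =ᶠ[nhds z] Ψ := by
      filter_upwards [hU.mem_nhds hz] with x hx
      have hhxC : DifferentiableAt ℂ h x := hh.differentiableAt (hU.mem_nhds hx)
      have hhx : DifferentiableAt ℝ h x := hhxC.restrictScalars ℝ
      have hcomp : fderiv ℝ (G ∘ h) x = (fderiv ℝ G (h x)).comp (fderiv ℝ h x) :=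
        fderiv_comp x (hGd (h x)) hhx
      have hres : fderiv ℝ h x = (fderiv ℂ h x).restrictScalars ℝ :=
        hhxC.fderiv_restrictScalars ℝ
      calc fderiv ℝ φ x = fderiv ℝ (G ∘ h) x := rfl
        _ = (fderiv ℝ G (h x)).comp (fderiv ℝ h x) := hcomp
        _ = Ψ x := by rw [hΨdef, hres]
    have hΨd : DifferentiableAt ℝ Ψ z := by
      have hA : DifferentiableAt ℝ (fun x => fderiv ℝ G (h x)) z :=
        (hGd1 (h z)).comp z ((hh.differentiableAt (hU.mem_nhds hz)).restrictScalars ℝ)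
      have hB : DifferentiableAt ℝ (fun x => (fderiv ℂ h x).restrictScalars ℝ) z := by
        have hres : DifferentiableAt ℝ (fun x => fderiv ℂ h x) z := hBd.restrictScalars ℝ
        have hL : DifferentiableAt ℝ
            (fun T : EuclideanSpace ℂ (Fin n) →L[ℂ] ℂ => T.restrictScalars ℝ)
            (fderiv ℂ h z) :=
          (ContinuousLinearMap.restrictScalarsIsometry ℂ (EuclideanSpace ℂ (Fin n)) ℂ ℝ
            ℝ).toContinuousLinearMap.differentiableAt
        exact hL.comp z hres
      exact hA.clm_comp hB
    exact hΨd.congr_of_eventuallyEq heq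
  -- reduce leviForm to line derivatives
  rw [leviForm, iteratedFDeriv_two_apply, iteratedFDeriv_two_apply]
  simp only [Matrix.cons_val_zero, Matrix.cons_val_one, Matrix.head_cons]
  rw [secondDeriv_line h1 h2 w, secondDeriv_line h1 h2 (Complex.I • w)]
  -- line data
  obtain ⟨huw, hsw, hduw, hdsw⟩ := line_data hU hh hz w
  obtain ⟨hui, hsi, hdui, hdsi⟩ := line_data hU hh hz (Complex.I • w)
  rw [oneDim H F hH hF _ _ _ _ _ _ huw hsw hduw hdsw,
      oneDim H F hH hF _ _ _ _ _ _ hui hsi hdui hdsi]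
  -- simplify the point values
  have hz0 : ∀ v : EuclideanSpace ℂ (Fin n), z + (0:ℝ) • v = z := by intro v; simp
  simp only [hz0, zero_smul, add_zero]
  -- notation
  set c : ℂ := fderiv ℂ h z w with hcdef
  set B : ℂ := fderiv ℂ (fderiv ℂ h) z w w with hBdef
  have hIc : fderiv ℂ h z (Complex.I • w) = Complex.I * c := by
    rw [map_smul, smul_eq_mul, hcdef]
  have hIB : fderiv ℂ (fderiv ℂ h) z (Complex.I • w) (Complex.I • w) = -B := by
    have h1 : fderiv ℂ (fderiv ℂ h) z (Complex.I • w)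
        = Complex.I • (fderiv ℂ (fderiv ℂ h) z w) := map_smul _ _ _
    rw [h1, ContinuousLinearMap.smul_apply, map_smul, smul_eq_mul, smul_eq_mul,
      ← mul_assoc, Complex.I_mul_I, neg_one_mul, hBdef]
  rw [hIc, hIB]
  have hre1 : (Complex.I * c).re = -c.im := by simp
  have hre2 : (Complex.I * c).im = c.re := by simp
  have hre3 : (-B).re = -B.re := by simp
  have hre4 : (-B).im = -B.im := by simp
  rw [hre1, hre2, hre3, hre4]
  -- the final inequality
  set a : ℝ := (h z).re
  set b : ℝ := (h z).im
  set p : ℝ := c.re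
  set q : ℝ := c.im
  have hR0 : (0:ℝ) ≤ a ^ 2 + b ^ 2 := by positivity
  have hM0 : (0:ℝ) ≤ a ^ 2 := by positivity
  have hDH := hH1 _ hR0
  have hD2H := hH2 _ hR0
  have hHH := hH0 _ hR0
  have hFM := hF0 _ hM0
  have hDF := hF1 _ hM0
  have hD2F := hF2 _ hM0
  nlinarith [mul_nonneg (mul_nonneg hD2H hFM) (sq_nonneg (2*a*p + 2*b*q)),
    mul_nonneg (mul_nonneg hD2H hFM) (sq_nonneg (2*b*p - 2*a*q)),
    mul_nonneg (mul_nonneg hHH hD2F) (sq_nonneg (2*a*p)),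
    mul_nonneg (mul_nonneg hHH hD2F) (sq_nonneg (2*a*q)),
    mul_nonneg (mul_nonneg hDH hDF) (sq_nonneg (a*p)),
    mul_nonneg (mul_nonneg hDH hDF) (sq_nonneg (a*q))]
end

section
/- Let H, F : ℝ → ℝ be twice continuously differentiable functions with H(x) ≥ 0, H′(x) ≥ 0, H″(x) ≥ 0 and F(x) ≥ 0, F′(x) ≥ 0, F″(x) ≥ 0 for all x ≥ 0, and assume additionally F(0) = 0. Let h be holomorphic on an open set U ⊆ ℂⁿ and define ρ : ℂⁿ → ℝ by ρ(z) := H(|h(z)|²)·F((Re h(z))²). Then for every z ∈ U with Re h(z) ≠ 0 and every w ∈ ℂⁿ, 𝓛ρ(z; w) ≥ (1/2)·H(|h(z)|²)·( F((Re h(z))²) / (Re h(z))² )·|Dh(z)w|². -/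
open Complex Metric

set_option maxHeartbeats 2000000
set_option synthInstance.maxHeartbeats 1000000

lemma slope_le_deriv {F : ℝ → ℝ} (hF : ContDiff ℝ 2 F) (hF2 : ∀ x : ℝ, 0 ≤ x → 0 ≤ deriv (deriv F) x)
    (hFzero : F 0 = 0) {t : ℝ} (ht : 0 < t) : F t ≤ t * deriv F t := by
  have hFd : Differentiable ℝ F := hF.differentiable two_ne_zero
  have hF'c : ContDiff ℝ 1 (deriv F) := ((contDiff_succ_iff_deriv (n := 1)).1 (by exact_mod_cast hF)).2.2
  have hF'd : Differentiable ℝ (deriv F) := hF'c.differentiable one_ne_zero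
  have hmono : MonotoneOn (deriv F) (Set.Ici (0:ℝ)) := by
    apply monotoneOn_of_deriv_nonneg (convex_Ici 0) (hF'd.continuous.continuousOn)
      (hF'd.differentiableOn)
    intro x hx
    exact hF2 x (le_of_lt (by simpa using hx))
  obtain ⟨c, hc, hceq⟩ := exists_hasDerivAt_eq_slope F (deriv F) ht
    (hFd.continuous.continuousOn) (fun x _ => (hFd x).hasDerivAt)
  have h1 : deriv F c ≤ deriv F t := hmono (le_of_lt hc.1) (le_of_lt ht) (le_of_lt hc.2)
  have h2 : deriv F c = F t / t := by simpa [hFzero] using hceq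
  rw [h2] at h1
  calc F t = (F t / t) * t := by field_simp
    _ ≤ deriv F t * t := mul_le_mul_of_nonneg_right h1 (le_of_lt ht)
    _ = t * deriv F t := mul_comm _ _

lemma diffAt_fderiv_apply {n : ℕ} {U : Set (EuclideanSpace ℂ (Fin n))} (hU : IsOpen U)
    {h : EuclideanSpace ℂ (Fin n) → ℂ} (hh : DifferentiableOn ℂ h U)
    {z : EuclideanSpace ℂ (Fin n)} (hz : z ∈ U) (w : EuclideanSpace ℂ (Fin n)) :
    DifferentiableAt ℂ (fun y => fderiv ℂ h y w) z := by
  rcases eq_or_ne w 0 with rfl | hw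
  · simpa using (differentiableAt_const (0:ℂ))
  obtain ⟨ε, hε, hball⟩ := Metric.isOpen_iff.1 hU z hz
  set r : ℝ := ε / 4 with hr_def
  have hr : 0 < r := by positivity
  have hmem : ∀ x : EuclideanSpace ℂ (Fin n), ‖x - z‖ < 3 * r → x ∈ U := by
    intro x hx
    apply hball
    rw [mem_ball, dist_eq_norm]
    linarith
  have hdiffat : ∀ x : EuclideanSpace ℂ (Fin n), ‖x - z‖ < 3 * r → DifferentiableAt ℂ h x := by
    intro x hx
    exact hh.differentiableAt (hU.mem_nhds (hmem x hx))
  -- bound on h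
  have hKU : closedBall z (2 * r) ⊆ U := by
    intro x hx
    apply hmem
    rw [mem_closedBall, dist_eq_norm] at hx
    linarith
  obtain ⟨M, hM⟩ := (isCompact_closedBall z (2 * r)).exists_bound_of_continuousOn
    (hh.continuousOn.mono hKU)
  have hM0 : 0 ≤ M := le_trans (norm_nonneg _) (hM z (mem_closedBall_self (by positivity)))
  -- Cauchy estimate for the derivative
  have hfb : ∀ ξ : EuclideanSpace ℂ (Fin n), ‖ξ - z‖ ≤ 3 * r / 2 →
      ‖fderiv ℂ h ξ‖ ≤ (2 * M + 1) / (r / 2) := by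
    intro ξ hξ
    have hξU : ‖ξ - z‖ < 3 * r := by linarith
    apply ContinuousLinearMap.opNorm_le_bound _ (by positivity)
    intro x
    rcases eq_or_ne x 0 with rfl | hx
    · simp
    have hxn : (0:ℝ) < ‖x‖ := norm_pos_iff.2 hx
    set v : EuclideanSpace ℂ (Fin n) := ‖x‖⁻¹ • x with hv_def
    have hvnorm : ‖v‖ = 1 := by
      rw [hv_def, norm_smul]
      simp [_root_.abs_of_nonneg (inv_nonneg.2 hxn.le), inv_mul_cancel₀ hxn.ne']
    have hpt : ∀ μ : ℂ, ‖μ‖ < r / 2 → ‖ξ + μ • v - z‖ ≤ 2 * r := by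
      intro μ hμ
      calc ‖ξ + μ • v - z‖ = ‖(ξ - z) + μ • v‖ := by rw [add_sub_right_comm]
        _ ≤ ‖ξ - z‖ + ‖μ • v‖ := norm_add_le _ _
        _ ≤ 3 * r / 2 + r / 2 := by
            refine add_le_add hξ ?_
            rw [norm_smul, hvnorm, mul_one]
            exact hμ.le
        _ = 2 * r := by ring
    have hdslice : DifferentiableOn ℂ (fun μ : ℂ => h (ξ + μ • v)) (ball 0 (r / 2)) := by
      intro μ hμ
      rw [mem_ball, dist_zero_right] at hμ
      have hμU : ‖ξ + μ • v - z‖ < 3 * r := lt_of_le_of_lt (hpt μ hμ) (by linarith)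
      have h1 : HasDerivAt (fun μ' : ℂ => ξ + μ' • v) v μ := by
        simpa using ((hasDerivAt_id μ).smul_const v).const_add ξ
      exact (((hdiffat _ hμU).hasFDerivAt).comp_hasDerivAt μ h1).differentiableAt.differentiableWithinAt
    have hmaps : Set.MapsTo (fun μ : ℂ => h (ξ + μ • v)) (ball 0 (r / 2))
        (ball (h (ξ + (0:ℂ) • v)) (2 * M + 1)) := by
      intro μ hμ
      rw [mem_ball, dist_zero_right] at hμ
      rw [mem_ball, dist_eq_norm]
      have h1 : ‖h (ξ + μ • v)‖ ≤ M := hM _ (by rw [mem_closedBall, dist_eq_norm]; exact hpt μ hμ)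
      have h2 : ‖h (ξ + (0:ℂ) • v)‖ ≤ M := hM _ (by
        rw [mem_closedBall, dist_eq_norm]
        exact hpt 0 (by simpa using half_pos hr))
      calc ‖h (ξ + μ • v) - h (ξ + (0:ℂ) • v)‖ ≤ ‖h (ξ + μ • v)‖ + ‖h (ξ + (0:ℂ) • v)‖ :=
            norm_sub_le _ _
        _ ≤ M + M := by linarith
        _ < 2 * M + 1 := by linarith
    have hcauchy := norm_deriv_le_div_of_mapsTo_ball hdslice
      (by simpa using hmaps.mono_right ball_subset_closedBall) (half_pos hr)
    have hder : HasDerivAt (fun μ : ℂ => h (ξ + μ • v)) (fderiv ℂ h ξ v) 0 := by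
      have h1 : HasDerivAt (fun μ' : ℂ => ξ + μ' • v) v 0 := by
        simpa using ((hasDerivAt_id (0:ℂ)).smul_const v).const_add ξ
      have h0 : HasFDerivAt h (fderiv ℂ h ξ) (ξ + (0:ℂ) • v) := by
        simpa using (hdiffat ξ hξU).hasFDerivAt
      have h2 := h0.comp_hasDerivAt 0 h1
      exact h2
    rw [hder.deriv] at hcauchy
    have hxv : (fderiv ℂ h ξ) x = (‖x‖ : ℝ) • (fderiv ℂ h ξ) v := by
      rw [← (fderiv ℂ h ξ).map_smul_of_tower]
      congr 1
      rw [hv_def, smul_smul, mul_inv_cancel₀ hxn.ne', one_smul]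
    rw [hxv, norm_smul]
    simp only [norm_norm]
    rw [mul_comm ((2 * M + 1) / (r / 2)) ‖x‖]
    exact mul_le_mul_of_nonneg_left hcauchy (norm_nonneg x)
  -- radius in the w-direction
  have hwn : (0:ℝ) < ‖w‖ := norm_pos_iff.2 hw
  set r' : ℝ := r / ‖w‖ with hr'_def
  have hr' : 0 < r' := by positivity
  have hgeom : ∀ y : EuclideanSpace ℂ (Fin n), ‖y - z‖ < r → ∀ μ : ℂ, ‖μ‖ ≤ r' →
      ‖y + μ • w - z‖ < 2 * r := by
    intro y hy μ hμ
    calc ‖y + μ • w - z‖ = ‖(y - z) + μ • w‖ := by rw [add_sub_right_comm]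
      _ ≤ ‖y - z‖ + ‖μ • w‖ := norm_add_le _ _
      _ < r + r := by
          apply add_lt_add_of_lt_of_le hy
          rw [norm_smul]
          calc ‖μ‖ * ‖w‖ ≤ r' * ‖w‖ := mul_le_mul_of_nonneg_right hμ (norm_nonneg w)
            _ = r := by rw [hr'_def]; field_simp
      _ = 2 * r := by ring
  borelize (EuclideanSpace ℂ (Fin n))
  -- the integral representation
  have hrep : ∀ y ∈ ball z r, fderiv ℂ h y w =
      (2 * ↑Real.pi * I)⁻¹ • ∮ ζ in C(0, r'), ζ⁻¹ • ζ⁻¹ • h (y + ζ • w) := by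
    intro y hy
    rw [mem_ball, dist_eq_norm] at hy
    have hg : DifferentiableOn ℂ (fun ζ : ℂ => h (y + ζ • w)) (closedBall 0 (r' : ℝ)) := by
      intro ζ hζ
      rw [mem_closedBall, dist_zero_right] at hζ
      have hζU : ‖y + ζ • w - z‖ < 3 * r := lt_trans (hgeom y hy ζ hζ) (by linarith)
      have h1 : HasDerivAt (fun ζ' : ℂ => y + ζ' • w) w ζ := by
        simpa using ((hasDerivAt_id ζ).smul_const w).const_add y
      exact (((hdiffat _ hζU).hasFDerivAt).comp_hasDerivAt ζ h1).differentiableAt.differentiableWithinAt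
    have hps := DifferentiableOn.hasFPowerSeriesOnBall (R := ⟨r', hr'.le⟩) hg
      (by exact_mod_cast hr')
    have hd := hps.hasFPowerSeriesAt.deriv
    have hder : HasDerivAt (fun ζ : ℂ => h (y + ζ • w)) (fderiv ℂ h y w) 0 := by
      have h1 : HasDerivAt (fun ζ' : ℂ => y + ζ' • w) w 0 := by
        simpa using ((hasDerivAt_id (0:ℂ)).smul_const w).const_add y
      have h0 : HasFDerivAt h (fderiv ℂ h y) (y + (0:ℂ) • w) := by
        simpa using (hh.differentiableAt (hU.mem_nhds (hmem y (by linarith)))).hasFDerivAt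
      exact h0.comp_hasDerivAt 0 h1
    rw [hder.deriv] at hd
    rw [hd, cauchyPowerSeries_apply]
    norm_num
    rfl
  -- differentiability of the integral representation
  have hΦdiff : DifferentiableAt ℂ (fun y : EuclideanSpace ℂ (Fin n) =>
      (2 * ↑Real.pi * I)⁻¹ • ∮ ζ in C(0, r'), ζ⁻¹ • ζ⁻¹ • h (y + ζ • w)) z := by
    apply DifferentiableAt.fun_const_smul
    simp only [circleIntegral]
    set C₃ : ℝ := r' * (r'⁻¹ * (r'⁻¹ * ((2 * M + 1) / (r / 2)))) with hC₃_def
    have key := intervalIntegral.hasFDerivAt_integral_of_dominated_of_fderiv_le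
      (𝕜 := ℂ) (μ := MeasureTheory.volume) (a := 0) (b := 2 * Real.pi)
      (F := fun y θ => deriv (circleMap 0 r') θ •
        ((circleMap 0 r' θ)⁻¹ • (circleMap 0 r' θ)⁻¹ • h (y + circleMap 0 r' θ • w)))
      (F' := fun y θ => deriv (circleMap 0 r') θ •
        ((circleMap 0 r' θ)⁻¹ • (circleMap 0 r' θ)⁻¹ • fderiv ℂ h (y + circleMap 0 r' θ • w)))
      (x₀ := z) (bound := fun _ => C₃) (s := ball z (r / 2)) (Metric.ball_mem_nhds z (half_pos hr)) ?_ ?_ ?_ ?_ ?_ ?_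
    · exact key.differentiableAt
    · -- measurability of F x for x near z
      filter_upwards [Metric.ball_mem_nhds z hr] with x hx
      rw [mem_ball, dist_eq_norm] at hx
      apply Continuous.aestronglyMeasurable
      have hc1 : Continuous fun θ => circleMap 0 r' θ := continuous_circleMap 0 r'
      have hne : ∀ θ, circleMap 0 r' θ ≠ 0 := fun θ => circleMap_ne_center hr'.ne'
      have hc2 : Continuous fun θ => h (x + circleMap 0 r' θ • w) := by
        apply hh.continuousOn.comp_continuous
        · exact continuous_const.add (hc1.smul continuous_const)
        · intro θ
          apply hmem
          have := hgeom x hx (circleMap 0 r' θ)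
            (by rw [norm_circleMap_zero]; simp [_root_.abs_of_nonneg hr'.le])
          linarith
      have hc3 : Continuous fun θ => deriv (circleMap 0 r') θ := by
        simp only [deriv_circleMap]
        exact (hc1.mul continuous_const)
      exact hc3.smul ((hc1.inv₀ hne).smul ((hc1.inv₀ hne).smul hc2))
    · -- integrability at z
      apply Continuous.intervalIntegrable
      have hc1 : Continuous fun θ => circleMap 0 r' θ := continuous_circleMap 0 r'
      have hne : ∀ θ, circleMap 0 r' θ ≠ 0 := fun θ => circleMap_ne_center hr'.ne'
      have hc2 : Continuous fun θ => h (z + circleMap 0 r' θ • w) := by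
        apply hh.continuousOn.comp_continuous
        · exact continuous_const.add (hc1.smul continuous_const)
        · intro θ
          apply hmem
          have := hgeom z (by simpa using hr) (circleMap 0 r' θ)
            (by rw [norm_circleMap_zero]; simp [_root_.abs_of_nonneg hr'.le])
          linarith
      have hc3 : Continuous fun θ => deriv (circleMap 0 r') θ := by
        simp only [deriv_circleMap]
        exact (hc1.mul continuous_const)
      exact hc3.smul ((hc1.inv₀ hne).smul ((hc1.inv₀ hne).smul hc2))
    · -- measurability of F' z
      haveI : MeasurableSMul₂ ℂ (EuclideanSpace ℂ (Fin n) →L[ℂ] ℂ) :=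
        ContinuousSMul.measurableSMul₂
      apply Measurable.aestronglyMeasurable
      have hc1 : Continuous fun θ => circleMap 0 r' θ := continuous_circleMap 0 r'
      have hne : ∀ θ, circleMap 0 r' θ ≠ 0 := fun θ => circleMap_ne_center hr'.ne'
      have hc3 : Continuous fun θ => deriv (circleMap 0 r') θ := by
        simp only [deriv_circleMap]
        exact (hc1.mul continuous_const)
      have hm : Measurable fun θ => fderiv ℂ h (z + circleMap 0 r' θ • w) :=
        (measurable_fderiv ℂ h).comp
          (continuous_const.add (hc1.smul continuous_const)).measurable
      exact hc3.measurable.smul (((hc1.inv₀ hne).measurable).smul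
        (((hc1.inv₀ hne).measurable).smul hm))
    · -- bound
      filter_upwards with θ _ x hx
      rw [mem_ball, dist_eq_norm] at hx
      have habs : ‖circleMap 0 r' θ‖ = r' := by
        rw [norm_circleMap_zero]; exact _root_.abs_of_nonneg hr'.le
      have hptx : ‖x + circleMap 0 r' θ • w - z‖ ≤ 3 * r / 2 := by
        calc ‖x + circleMap 0 r' θ • w - z‖ = ‖(x - z) + circleMap 0 r' θ • w‖ := by
              rw [add_sub_right_comm]
          _ ≤ ‖x - z‖ + ‖circleMap 0 r' θ • w‖ := norm_add_le _ _
          _ ≤ r / 2 + r := by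
              apply add_le_add hx.le
              rw [norm_smul, habs, hr'_def]
              exact (div_mul_cancel₀ _ hwn.ne').le
          _ = 3 * r / 2 := by ring
      have h1 : ‖fderiv ℂ h (x + circleMap 0 r' θ • w)‖ ≤ (2 * M + 1) / (r / 2) := hfb _ hptx
      have hd1 : ‖deriv (circleMap 0 r') θ‖ = r' := by
        rw [deriv_circleMap, norm_mul, norm_circleMap_zero, Complex.norm_I,
          mul_one]
        exact _root_.abs_of_nonneg hr'.le
      have e1 : ‖deriv (circleMap 0 r') θ • (circleMap 0 r' θ)⁻¹ • (circleMap 0 r' θ)⁻¹ •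
          fderiv ℂ h (x + circleMap 0 r' θ • w)‖ = r' * (r'⁻¹ * (r'⁻¹ *
          ‖fderiv ℂ h (x + circleMap 0 r' θ • w)‖)) := by
        simp only [norm_smul, norm_inv, hd1, habs]
      rw [e1, hC₃_def]
      have hrr : (0:ℝ) ≤ r'⁻¹ := inv_nonneg.2 hr'.le
      have := mul_le_mul_of_nonneg_left h1 hrr
      have := mul_le_mul_of_nonneg_left this hrr
      have := mul_le_mul_of_nonneg_left this hr'.le
      exact this
    · exact intervalIntegrable_const
    · -- differentiability of F x at each x in the ball
      filter_upwards with θ _ x hx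
      rw [mem_ball, dist_eq_norm] at hx
      apply HasFDerivAt.fun_const_smul
      apply HasFDerivAt.fun_const_smul
      apply HasFDerivAt.fun_const_smul
      have habs : ‖circleMap 0 r' θ‖ = r' := by
        rw [norm_circleMap_zero]; exact _root_.abs_of_nonneg hr'.le
      have hptx : ‖x + circleMap 0 r' θ • w - z‖ < 3 * r := by
        calc ‖x + circleMap 0 r' θ • w - z‖ = ‖(x - z) + circleMap 0 r' θ • w‖ := by
              rw [add_sub_right_comm]
          _ ≤ ‖x - z‖ + ‖circleMap 0 r' θ • w‖ := norm_add_le _ _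
          _ < r / 2 + r := by
              apply add_lt_add_of_lt_of_le hx
              rw [norm_smul, habs, hr'_def]
              exact (div_mul_cancel₀ _ hwn.ne').le
          _ < 3 * r := by linarith
      have h0 : HasFDerivAt h (fderiv ℂ h (x + circleMap 0 r' θ • w)) (x + circleMap 0 r' θ • w) :=
        (hdiffat _ hptx).hasFDerivAt
      have h1 : HasFDerivAt (fun y : EuclideanSpace ℂ (Fin n) => y + circleMap 0 r' θ • w)
          (ContinuousLinearMap.id ℂ _) x := (hasFDerivAt_id x).add_const _
      have h2 := h0.comp x h1
      exact h2
  -- conclude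
  have heq : (fun y => fderiv ℂ h y w) =ᶠ[nhds z]
      (fun y : EuclideanSpace ℂ (Fin n) =>
        (2 * ↑Real.pi * I)⁻¹ • ∮ ζ in C(0, r'), ζ⁻¹ • ζ⁻¹ • h (y + ζ • w)) :=
    Filter.eventuallyEq_of_mem (Metric.ball_mem_nhds z hr) hrep
  exact hΦdiff.congr_of_eventuallyEq heq

lemma key_second_deriv {n : ℕ} (H F : ℝ → ℝ) (hH : ContDiff ℝ 2 H) (hF : ContDiff ℝ 2 F)
    {U : Set (EuclideanSpace ℂ (Fin n))} (hU : IsOpen U)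
    {h : EuclideanSpace ℂ (Fin n) → ℂ} (hh : DifferentiableOn ℂ h U)
    {z : EuclideanSpace ℂ (Fin n)} (hz : z ∈ U)
    (e : EuclideanSpace ℂ (Fin n)) (Ψ : EuclideanSpace ℂ (Fin n) → ℂ)
    (LΨ : EuclideanSpace ℂ (Fin n) →L[ℝ] ℂ)
    (hΨeq : ∀ y, fderiv ℂ h y e = Ψ y) (hΨ : HasFDerivAt Ψ LΨ z) :
    iteratedFDeriv ℝ 2
      (fun ζ => H ((h ζ).re * (h ζ).re + (h ζ).im * (h ζ).im) * F ((h ζ).re * (h ζ).re)) z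
      ![e, e] =
      ((deriv H ((h z).re * (h z).re + (h z).im * (h z).im)
            * (2 * (h z).re * (Ψ z).re + 2 * (h z).im * (Ψ z).im))
          * deriv F ((h z).re * (h z).re) * (2 * (h z).re)
        + H ((h z).re * (h z).re + (h z).im * (h z).im)
          * (deriv (deriv F) ((h z).re * (h z).re) * (2 * (h z).re * (Ψ z).re))
          * (2 * (h z).re)
        + H ((h z).re * (h z).re + (h z).im * (h z).im) * deriv F ((h z).re * (h z).re)
          * (2 * (Ψ z).re)
        + (deriv F ((h z).re * (h z).re) * (2 * (h z).re * (Ψ z).re))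
          * deriv H ((h z).re * (h z).re + (h z).im * (h z).im) * (2 * (h z).re)
        + F ((h z).re * (h z).re) * (deriv (deriv H) ((h z).re * (h z).re + (h z).im * (h z).im)
            * (2 * (h z).re * (Ψ z).re + 2 * (h z).im * (Ψ z).im)) * (2 * (h z).re)
        + F ((h z).re * (h z).re) * deriv H ((h z).re * (h z).re + (h z).im * (h z).im)
          * (2 * (Ψ z).re)) * (Ψ z).re
      + ((deriv F ((h z).re * (h z).re) * (2 * (h z).re * (Ψ z).re))
          * deriv H ((h z).re * (h z).re + (h z).im * (h z).im) * (2 * (h z).im)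
        + F ((h z).re * (h z).re) * (deriv (deriv H) ((h z).re * (h z).re + (h z).im * (h z).im)
            * (2 * (h z).re * (Ψ z).re + 2 * (h z).im * (Ψ z).im)) * (2 * (h z).im)
        + F ((h z).re * (h z).re) * deriv H ((h z).re * (h z).re + (h z).im * (h z).im)
          * (2 * (Ψ z).im)) * (Ψ z).im
      + (H ((h z).re * (h z).re + (h z).im * (h z).im) * deriv F ((h z).re * (h z).re)
          * (2 * (h z).re)
        + F ((h z).re * (h z).re) * deriv H ((h z).re * (h z).re + (h z).im * (h z).im)
          * (2 * (h z).re)) * (LΨ e).re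
      + (F ((h z).re * (h z).re) * deriv H ((h z).re * (h z).re + (h z).im * (h z).im)
          * (2 * (h z).im)) * (LΨ e).im := by
  have hHd : Differentiable ℝ H := hH.differentiable two_ne_zero
  have hFd : Differentiable ℝ F := hF.differentiable two_ne_zero
  have hH'c : ContDiff ℝ 1 (deriv H) := ((contDiff_succ_iff_deriv (n := 1)).1 (by exact_mod_cast hH)).2.2
  have hF'c : ContDiff ℝ 1 (deriv F) := ((contDiff_succ_iff_deriv (n := 1)).1 (by exact_mod_cast hF)).2.2
  have hH'd : Differentiable ℝ (deriv H) := hH'c.differentiable one_ne_zero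
  have hF'd : Differentiable ℝ (deriv F) := hF'c.differentiable one_ne_zero
  have hDh : ∀ y ∈ U, HasFDerivAt h ((fderiv ℂ h y).restrictScalars ℝ) y := fun y hy =>
    ((hh.differentiableAt (hU.mem_nhds hy)).hasFDerivAt).restrictScalars ℝ
  have hu : ∀ y ∈ U, HasFDerivAt (fun y' => (h y').re)
      (Complex.reCLM.comp ((fderiv ℂ h y).restrictScalars ℝ)) y := fun y hy =>
    (Complex.reCLM.hasFDerivAt).comp y (hDh y hy)
  have hv : ∀ y ∈ U, HasFDerivAt (fun y' => (h y').im)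
      (Complex.imCLM.comp ((fderiv ℂ h y).restrictScalars ℝ)) y := fun y hy =>
    (Complex.imCLM.hasFDerivAt).comp y (hDh y hy)
  set Lφ : EuclideanSpace ℂ (Fin n) → (EuclideanSpace ℂ (Fin n) →L[ℝ] ℝ) := fun y =>
    (H ((h y).re * (h y).re + (h y).im * (h y).im) * deriv F ((h y).re * (h y).re)
        * (2 * (h y).re)
      + F ((h y).re * (h y).re) * deriv H ((h y).re * (h y).re + (h y).im * (h y).im)
        * (2 * (h y).re)) •
        (Complex.reCLM.comp ((fderiv ℂ h y).restrictScalars ℝ))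
    + (F ((h y).re * (h y).re) * deriv H ((h y).re * (h y).re + (h y).im * (h y).im)
        * (2 * (h y).im)) •
        (Complex.imCLM.comp ((fderiv ℂ h y).restrictScalars ℝ)) with hLφ_def
  have hfdφ : ∀ y ∈ U, fderiv ℝ
      (fun ζ => H ((h ζ).re * (h ζ).re + (h ζ).im * (h ζ).im) * F ((h ζ).re * (h ζ).re)) y
      = Lφ y := by
    intro y hy
    have hsq := ((hu y hy).fun_mul (hu y hy)).fun_add ((hv y hy).fun_mul (hv y hy))
    have hHs := (hHd ((h y).re * (h y).re + (h y).im * (h y).im)).hasDerivAt.comp_hasFDerivAt y hsq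
    have hFt := (hFd ((h y).re * (h y).re)).hasDerivAt.comp_hasFDerivAt y ((hu y hy).fun_mul (hu y hy))
    refine (hHs.fun_mul hFt).fderiv.trans ?_
    ext x
    simp only [hLφ_def, ContinuousLinearMap.add_apply, ContinuousLinearMap.smul_apply,
      ContinuousLinearMap.coe_comp', Function.comp_apply,
      ContinuousLinearMap.coe_restrictScalars', Complex.reCLM_apply, Complex.imCLM_apply,
      smul_eq_mul]
    ring
  -- reduce to a directional derivative of Lφ
  rw [iteratedFDeriv_two_apply]
  simp only [Matrix.cons_val_zero, Matrix.cons_val_one, Matrix.head_cons]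
  have hev : fderiv ℝ
      (fun ζ => H ((h ζ).re * (h ζ).re + (h ζ).im * (h ζ).im) * F ((h ζ).re * (h ζ).re))
      =ᶠ[nhds z] Lφ := Filter.eventuallyEq_of_mem (hU.mem_nhds hz) hfdφ
  rw [hev.fderiv_eq]
  -- differentiability of Lφ at z
  have hsingle : ∀ x : EuclideanSpace ℂ (Fin n),
      x = ∑ j : Fin n, x j • EuclideanSpace.single j (1:ℂ) := by
    intro x
    have h1 := (EuclideanSpace.basisFun (Fin n) ℂ).sum_repr x
    simp only [EuclideanSpace.basisFun_repr, EuclideanSpace.basisFun_apply] at h1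
    exact h1.symm
  have hAC : DifferentiableAt ℂ (fun y => fderiv ℂ h y) z := by
    have hrepr : (fun y : EuclideanSpace ℂ (Fin n) => fderiv ℂ h y) = fun y =>
        ∑ j : Fin n, (fderiv ℂ h y (EuclideanSpace.single j (1:ℂ))) •
          (EuclideanSpace.proj j : EuclideanSpace ℂ (Fin n) →L[ℂ] ℂ) := by
      funext y
      ext x
      rw [ContinuousLinearMap.sum_apply]
      conv_lhs => rw [hsingle x]
      rw [map_sum]
      refine Finset.sum_congr rfl fun j _ => ?_
      have hp : (EuclideanSpace.proj j : EuclideanSpace ℂ (Fin n) →L[ℂ] ℂ) x = x j := rfl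
      simp only [map_smul, ContinuousLinearMap.smul_apply, hp, smul_eq_mul]
      ring
    rw [hrepr]
    exact DifferentiableAt.fun_sum fun j _ =>
      (diffAt_fderiv_apply hU hh hz _).smul_const _
  have hD : DifferentiableAt ℝ (fun y => (fderiv ℂ h y).restrictScalars ℝ) z :=
    (ContinuousLinearMap.restrictScalarsL ℂ (EuclideanSpace ℂ (Fin n)) ℂ ℝ
      ℝ).differentiableAt.comp z (hAC.restrictScalars ℝ)
  have hRud : DifferentiableAt ℝ
      (fun y => Complex.reCLM.comp ((fderiv ℂ h y).restrictScalars ℝ)) z :=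
    (ContinuousLinearMap.compL ℝ (EuclideanSpace ℂ (Fin n)) ℂ ℝ
      Complex.reCLM).differentiableAt.comp z hD
  have hRvd : DifferentiableAt ℝ
      (fun y => Complex.imCLM.comp ((fderiv ℂ h y).restrictScalars ℝ)) z :=
    (ContinuousLinearMap.compL ℝ (EuclideanSpace ℂ (Fin n)) ℂ ℝ
      Complex.imCLM).differentiableAt.comp z hD
  -- scalar pieces at z
  have hsq0 := ((hu z hz).fun_mul (hu z hz)).fun_add ((hv z hz).fun_mul (hv z hz))
  have hHs0 := (hHd ((h z).re * (h z).re + (h z).im * (h z).im)).hasDerivAt.comp_hasFDerivAt z hsq0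
  have hH's0 := (hH'd ((h z).re * (h z).re + (h z).im * (h z).im)).hasDerivAt.comp_hasFDerivAt z hsq0
  have hFt0 := (hFd ((h z).re * (h z).re)).hasDerivAt.comp_hasFDerivAt z ((hu z hz).fun_mul (hu z hz))
  have hF't0 := (hF'd ((h z).re * (h z).re)).hasDerivAt.comp_hasFDerivAt z ((hu z hz).fun_mul (hu z hz))
  have h2u0 := (hu z hz).const_mul (2:ℝ)
  have h2v0 := (hv z hz).const_mul (2:ℝ)
  have hc1big := ((hHs0.fun_mul hF't0).fun_mul h2u0).fun_add ((hFt0.fun_mul hH's0).fun_mul h2u0)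
  have hc2big := (hFt0.fun_mul hH's0).fun_mul h2v0
  have hLφdiff : DifferentiableAt ℝ Lφ z := by
    rw [hLφ_def]
    exact (hc1big.differentiableAt.smul hRud).add (hc2big.differentiableAt.smul hRvd)
  have hre : HasFDerivAt (fun y => (Ψ y).re) (Complex.reCLM.comp LΨ) z :=
    Complex.reCLM.hasFDerivAt.comp z hΨ
  have him : HasFDerivAt (fun y => (Ψ y).im) (Complex.imCLM.comp LΨ) z :=
    Complex.imCLM.hasFDerivAt.comp z hΨ
  have hT := (hc1big.fun_mul hre).fun_add (hc2big.fun_mul him)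
  have happ := (ContinuousLinearMap.apply ℝ ℝ e).hasFDerivAt.comp z hLφdiff.hasFDerivAt
  have h6 : fderiv ℝ (fun y => Lφ y e) z =
      (ContinuousLinearMap.apply ℝ ℝ e).comp (fderiv ℝ Lφ z) := happ.fderiv
  have heq2 : (fun y => Lφ y e) = (fun y =>
      (H ((h y).re * (h y).re + (h y).im * (h y).im) * deriv F ((h y).re * (h y).re)
          * (2 * (h y).re)
        + F ((h y).re * (h y).re) * deriv H ((h y).re * (h y).re + (h y).im * (h y).im)
          * (2 * (h y).re)) * (Ψ y).re
      + (F ((h y).re * (h y).re) * deriv H ((h y).re * (h y).re + (h y).im * (h y).im)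
          * (2 * (h y).im)) * (Ψ y).im) := by
    funext y
    simp only [hLφ_def, ContinuousLinearMap.add_apply, ContinuousLinearMap.smul_apply,
      ContinuousLinearMap.coe_comp', Function.comp_apply,
      ContinuousLinearMap.coe_restrictScalars', Complex.reCLM_apply, Complex.imCLM_apply,
      smul_eq_mul]
    rw [hΨeq y]
  have h7 : fderiv ℝ (fun y => Lφ y e) z e =
      ((fderiv ℝ Lφ z) e) e := by rw [h6]; rfl
  rw [← h7]
  have hT2 := hT.congr_of_eventuallyEq (Filter.EventuallyEq.of_eq heq2)
  rw [hT2.fderiv]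
  simp only [ContinuousLinearMap.add_apply, ContinuousLinearMap.smul_apply,
    ContinuousLinearMap.coe_comp', Function.comp_apply,
    ContinuousLinearMap.coe_restrictScalars', Complex.reCLM_apply, Complex.imCLM_apply,
    smul_eq_mul, hΨeq]
  ring

/-- Let `H, F : ℝ → ℝ` be `C²` with `H, H', H'' ≥ 0` and `F, F', F'' ≥ 0` on `[0,∞)`,
and `F 0 = 0`.  Let `h` be holomorphic on an open `U ⊆ ℂⁿ` and set
`ρ(z) = H(|h z|²) F((Re h z)²)`.  Then for `z ∈ U` with `Re h z ≠ 0` and `w ∈ ℂⁿ`,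
`𝓛ρ(z; w) ≥ (1/2) H(|h z|²) (F((Re h z)²) / (Re h z)²) |Dh(z)w|²`. -/
theorem leviForm_model_lower_bound_quotient {n : ℕ}
    (H F : ℝ → ℝ) (hH : ContDiff ℝ 2 H) (hF : ContDiff ℝ 2 F)
    (hH0 : ∀ x : ℝ, 0 ≤ x → 0 ≤ H x)
    (hH1 : ∀ x : ℝ, 0 ≤ x → 0 ≤ deriv H x)
    (hH2 : ∀ x : ℝ, 0 ≤ x → 0 ≤ deriv (deriv H) x)
    (hF0 : ∀ x : ℝ, 0 ≤ x → 0 ≤ F x)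
    (hF1 : ∀ x : ℝ, 0 ≤ x → 0 ≤ deriv F x)
    (hF2 : ∀ x : ℝ, 0 ≤ x → 0 ≤ deriv (deriv F) x)
    (hFzero : F 0 = 0)
    {U : Set (EuclideanSpace ℂ (Fin n))} (hU : IsOpen U)
    {h : EuclideanSpace ℂ (Fin n) → ℂ} (hh : DifferentiableOn ℂ h U)
    {z : EuclideanSpace ℂ (Fin n)} (hz : z ∈ U) (hre : (h z).re ≠ 0)
    (w : EuclideanSpace ℂ (Fin n)) :
    leviForm (fun ζ => H (‖h ζ‖ ^ 2) * F ((h ζ).re ^ 2)) z w ≥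
      (1 / 2) * H (‖h z‖ ^ 2) *
        (F ((h z).re ^ 2) / (h z).re ^ 2) *
        ‖fderiv ℂ h z w‖ ^ 2 := by
  have habs2 : ∀ x : ℂ, ‖x‖ ^ 2 = x.re * x.re + x.im * x.im := fun x => by
    rw [Complex.sq_norm, Complex.normSq_apply]
  have hfuneq : (fun ζ => H (‖h ζ‖ ^ 2) * F ((h ζ).re ^ 2)) =
      (fun ζ => H ((h ζ).re * (h ζ).re + (h ζ).im * (h ζ).im) * F ((h ζ).re * (h ζ).re)) := by
    funext ζ
    rw [habs2, sq]
  rw [hfuneq, habs2 (h z), habs2 (fderiv ℂ h z w), show ((h z).re ^ 2 = (h z).re * (h z).re) from sq ((h z).re)]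
  rcases eq_or_ne w 0 with rfl | hw0
  · have h1 : iteratedFDeriv ℝ 2
        (fun ζ => H ((h ζ).re * (h ζ).re + (h ζ).im * (h ζ).im) * F ((h ζ).re * (h ζ).re)) z
        ![(0 : EuclideanSpace ℂ (Fin n)), 0] = 0 :=
      (iteratedFDeriv ℝ 2 _ z).map_coord_zero (i := 0) rfl
    simp only [leviForm, smul_zero, h1, add_zero, map_zero, Complex.zero_re, Complex.zero_im]
    norm_num
  -- main case
  have hψd : DifferentiableAt ℂ (fun y => fderiv ℂ h y w) z := diffAt_fderiv_apply hU hh hz w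
  have hψF : HasFDerivAt (fun y => fderiv ℂ h y w)
      ((fderiv ℂ (fun y => fderiv ℂ h y w) z).restrictScalars ℝ) z :=
    (hψd.hasFDerivAt).restrictScalars ℝ
  have key1 := key_second_deriv H F hH hF hU hh hz w (fun y => fderiv ℂ h y w)
    ((fderiv ℂ (fun y => fderiv ℂ h y w) z).restrictScalars ℝ) (fun y => rfl) hψF
  have hIeq : ∀ y, fderiv ℂ h y (I • w) = I * fderiv ℂ h y w := fun y => by
    rw [map_smul, smul_eq_mul]
  have hψF2 : HasFDerivAt (fun y => I * fderiv ℂ h y w)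
      (I • ((fderiv ℂ (fun y => fderiv ℂ h y w) z).restrictScalars ℝ)) z := hψF.const_mul I
  have key2 := key_second_deriv H F hH hF hU hh hz (I • w) (fun y => I * fderiv ℂ h y w)
    (I • ((fderiv ℂ (fun y => fderiv ℂ h y w) z).restrictScalars ℝ)) hIeq hψF2
  -- the two applied second-derivative values
  have hL1 : ((fderiv ℂ (fun y => fderiv ℂ h y w) z).restrictScalars ℝ) w =
      fderiv ℂ (fun y => fderiv ℂ h y w) z w := rfl
  have hL2 : (I • ((fderiv ℂ (fun y => fderiv ℂ h y w) z).restrictScalars ℝ)) (I • w) =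
      -(fderiv ℂ (fun y => fderiv ℂ h y w) z w) := by
    rw [ContinuousLinearMap.smul_apply]
    have h1 : ((fderiv ℂ (fun y => fderiv ℂ h y w) z).restrictScalars ℝ) (I • w) =
        I * fderiv ℂ (fun y => fderiv ℂ h y w) z w := by
      show (fderiv ℂ (fun y => fderiv ℂ h y w) z) (I • w) = _
      rw [map_smul, smul_eq_mul]
    rw [h1, smul_eq_mul, ← mul_assoc, Complex.I_mul_I, neg_one_mul]
  rw [leviForm, key1, key2, hL1, hL2]
  simp only [Complex.mul_re, Complex.mul_im, Complex.I_re, Complex.I_im, Complex.neg_re,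
    Complex.neg_im]
  set u : ℝ := (h z).re with hu_def
  set vv : ℝ := (h z).im with hvv_def
  set a : ℝ := (fderiv ℂ h z w).re with ha_def
  set b : ℝ := (fderiv ℂ h z w).im with hb_def
  set p : ℝ := (fderiv ℂ (fun y => fderiv ℂ h y w) z w).re with hp_def
  set q : ℝ := (fderiv ℂ (fun y => fderiv ℂ h y w) z w).im with hq_def
  have ht0 : 0 < u * u := by
    rcases lt_or_gt_of_ne hre with h' | h'
    · exact mul_pos_of_neg_of_neg h' h'
    · exact mul_pos h' h'
  have hs0 : (0:ℝ) ≤ u * u + vv * vv := by nlinarith [sq_nonneg u, sq_nonneg vv]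
  have hX : (0:ℝ) ≤ a * a + b * b := by nlinarith [sq_nonneg a, sq_nonneg b]
  have hh0 := hH0 _ hs0
  have hh1 := hH1 _ hs0
  have hh2 := hH2 _ hs0
  have hf0 := hF0 _ ht0.le
  have hf1 := hF1 _ ht0.le
  have hf2 := hF2 _ ht0.le
  have hslope := slope_le_deriv hF hF2 hFzero ht0
  have hdiv : F (u * u) / (u * u) ≤ deriv F (u * u) := by
    rw [div_le_iff₀ ht0]
    linarith [hslope]
  have hstep1 : 1 / 2 * H (u * u + vv * vv) * (F (u * u) / (u * u)) * (a * a + b * b) ≤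
      1 / 2 * H (u * u + vv * vv) * deriv F (u * u) * (a * a + b * b) := by
    apply mul_le_mul_of_nonneg_right _ hX
    apply mul_le_mul_of_nonneg_left hdiv
    positivity
  refine le_trans hstep1 ?_
  nlinarith [mul_nonneg (mul_nonneg (mul_nonneg hs0 hh2) hf0) hX,
    mul_nonneg (mul_nonneg hh1 hf0) hX,
    mul_nonneg (mul_nonneg (mul_nonneg ht0.le hh1) hf1) hX,
    mul_nonneg (mul_nonneg (mul_nonneg ht0.le hh0) hf2) hX,
    mul_nonneg (mul_nonneg hh0 hf1) hX]
end

section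
/- Fix natural numbers n and q with q ≥ 1, let u : (Fin (q+1) → Fin n) → ℂ be alternating, and let λ : Fin n → ℂ. Then Σ_{l ∈ Fin n} Σ_{I : Fin (q−1) → Fin n strictly increasing} | Σ_{j ∈ Fin n} λ(j)·u(l :: j :: I) |² = q · Σ_{I : Fin q → Fin n strictly increasing} | Σ_{j ∈ Fin n} λ(j)·u(j :: I) |². -/
open scoped Classical

private lemma alt_eq_zero {N n : ℕ} (u : (Fin N → Fin n) → ℂ)
    (halt : ∀ (v : Fin N → Fin n) (σ : Equiv.Perm (Fin N)),
      u (v ∘ σ) = ((Equiv.Perm.sign σ : ℤ) : ℂ) * u v)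
    (v : Fin N → Fin n) (hv : ¬ Function.Injective v) : u v = 0 := by
  rw [Function.not_injective_iff] at hv
  obtain ⟨a, b, hab, hne⟩ := hv
  have h1 : v ∘ (Equiv.swap a b) = v := by
    funext x
    rcases eq_or_ne x a with rfl | hxa
    · simp [Equiv.swap_apply_left, hab]
    rcases eq_or_ne x b with rfl | hxb
    · simp [Equiv.swap_apply_right, hab]
    · simp [Equiv.swap_apply_of_ne_of_ne hxa hxb]
  have h2 := halt v (Equiv.swap a b)
  rw [h1, Equiv.Perm.sign_swap hne] at h2
  have h3 : u v = - u v := by push_cast at h2; linear_combination h2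
  linear_combination h3 / 2

private lemma cons_comp_cycle {N n : ℕ} (J : Fin (N + 1) → Fin n) (k : Fin (N + 1)) (j : Fin n) :
    (Fin.cons j J : Fin (N + 2) → Fin n) ∘ ⇑(Fin.cycleRange k.succ)⁻¹
      = Fin.cons (J k) (Fin.cons j (J ∘ k.succAbove)) := by
  funext x
  have hinv : ⇑(Fin.cycleRange k.succ)⁻¹ = ⇑(Fin.cycleRange k.succ).symm := rfl
  rw [Function.comp_apply, hinv]
  refine Fin.cases ?_ (fun i => ?_) x
  · rw [Fin.cycleRange_symm_zero, Fin.cons_succ, Fin.cons_zero]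
  · rw [Fin.cycleRange_symm_succ, Fin.cons_succ]
    refine Fin.cases ?_ (fun m => ?_) i
    · rw [Fin.succ_succAbove_zero, Fin.cons_zero, Fin.cons_zero]
    · rw [Fin.succ_succAbove_succ, Fin.cons_succ, Fin.cons_succ]
      rfl

private lemma abs_sum_cons_eq {N n : ℕ} (u : (Fin (N + 2) → Fin n) → ℂ)
    (halt : ∀ (v : Fin (N + 2) → Fin n) (σ : Equiv.Perm (Fin (N + 2))),
      u (v ∘ σ) = ((Equiv.Perm.sign σ : ℤ) : ℂ) * u v)
    (lam : Fin n → ℂ) (J : Fin (N + 1) → Fin n) (k : Fin (N + 1)) :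
    ‖∑ j : Fin n, lam j * u (Fin.cons (J k) (Fin.cons j (J ∘ k.succAbove)))‖
      = ‖∑ j : Fin n, lam j * u (Fin.cons j J)‖ := by
  set ε : ℂ := ((Equiv.Perm.sign (Fin.cycleRange k.succ)⁻¹ : ℤ) : ℂ) with hε
  have h : ∀ j : Fin n, u (Fin.cons (J k) (Fin.cons j (J ∘ k.succAbove)))
      = ε * u (Fin.cons j J) := by
    intro j
    rw [← cons_comp_cycle J k j]
    exact halt _ _
  have hsum : (∑ j : Fin n, lam j * u (Fin.cons (J k) (Fin.cons j (J ∘ k.succAbove))))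
      = ε * ∑ j : Fin n, lam j * u (Fin.cons j J) := by
    rw [Finset.mul_sum]
    refine Finset.sum_congr rfl fun j _ => ?_
    rw [h j]; ring
  rw [hsum, norm_mul]
  have hone : ‖ε‖ = 1 := by
    rcases Int.units_eq_one_or (Equiv.Perm.sign (Fin.cycleRange k.succ)⁻¹) with h1 | h1 <;>
      rw [hε, h1] <;> simp
  rw [hone, one_mul]

private lemma strictMono_eq_of_mem {n m : ℕ} {s : Finset (Fin n)} (h : s.card = m)
    {f g : Fin m → Fin n} (hf : StrictMono f) (hg : StrictMono g)
    (hfs : ∀ x, f x ∈ s) (hgs : ∀ x, g x ∈ s) : f = g := by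
  rw [Finset.orderEmbOfFin_unique h hfs hf, Finset.orderEmbOfFin_unique h hgs hg]

theorem aux_contraction (n p : ℕ) (u : (Fin (p + 2) → Fin n) → ℂ)
    (halt : ∀ (v : Fin (p + 2) → Fin n) (σ : Equiv.Perm (Fin (p + 2))),
      u (v ∘ σ) = ((Equiv.Perm.sign σ : ℤ) : ℂ) * u v)
    (lam : Fin n → ℂ) :
    ∑ l : Fin n,
        ∑ I ∈ Finset.univ.filter (fun I : Fin p → Fin n => StrictMono I),
          ‖∑ j : Fin n, lam j * u (Fin.cons l (Fin.cons j I))‖ ^ 2 =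
      ((p + 1 : ℕ) : ℝ) *
        ∑ J ∈ Finset.univ.filter (fun J : Fin (p + 1) → Fin n => StrictMono J),
          ‖∑ j : Fin n, lam j * u (Fin.cons j J)‖ ^ 2 := by
  classical
  set F : Fin n × (Fin p → Fin n) → ℝ := fun z =>
    ‖∑ j : Fin n, lam j * u (Fin.cons z.1 (Fin.cons j z.2))‖ ^ 2 with hF
  set g : (Fin (p + 1) → Fin n) → ℝ := fun J =>
    ‖∑ j : Fin n, lam j * u (Fin.cons j J)‖ ^ 2 with hg
  set A : Finset (Fin n × (Fin p → Fin n)) :=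
    Finset.univ.filter (fun z => StrictMono z.2 ∧ ∀ i, z.2 i ≠ z.1) with hA
  set B : Finset (Fin (p + 1) × (Fin (p + 1) → Fin n)) :=
    Finset.univ ×ˢ Finset.univ.filter (fun J => StrictMono J) with hB
  have hcard : ∀ z ∈ A, (insert z.1 (Finset.image z.2 Finset.univ)).card = p + 1 := by
    intro z hz
    rw [hA, Finset.mem_filter] at hz
    obtain ⟨-, hmono, hne⟩ := hz
    rw [Finset.card_insert_of_notMem, Finset.card_image_of_injective _ hmono.injective,
      Finset.card_univ, Fintype.card_fin]
    intro hmem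
    obtain ⟨i, -, hi⟩ := Finset.mem_image.1 hmem
    exact hne i hi
  set Φ : Fin n × (Fin p → Fin n) → Fin (p + 1) × (Fin (p + 1) → Fin n) := fun z =>
    if h : (insert z.1 (Finset.image z.2 Finset.univ)).card = p + 1 then
      (((insert z.1 (Finset.image z.2 Finset.univ)).orderIsoOfFin h).symm
          ⟨z.1, Finset.mem_insert_self _ _⟩,
        fun i => (insert z.1 (Finset.image z.2 Finset.univ)).orderEmbOfFin h i)
    else (⟨0, Nat.succ_pos p⟩, fun _ => z.1) with hΦ
  set Ψ : Fin (p + 1) × (Fin (p + 1) → Fin n) → Fin n × (Fin p → Fin n) := fun z =>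
    (z.2 z.1, z.2 ∘ z.1.succAbove) with hΨ
  have hΨA : ∀ z ∈ B, Ψ z ∈ A := by
    rintro ⟨k, J⟩ hz
    rw [hB, Finset.mem_product, Finset.mem_filter] at hz
    obtain ⟨-, -, hJ⟩ := hz
    rw [hA, Finset.mem_filter]
    refine ⟨Finset.mem_univ _, hJ.comp (Fin.strictMono_succAbove k), fun i h => ?_⟩
    exact Fin.succAbove_ne k i (hJ.injective h)
  have hΦB : ∀ z ∈ A, Φ z ∈ B := by
    intro z hz
    rw [hΦ]; simp only [dif_pos (hcard z hz)]
    rw [hB, Finset.mem_product, Finset.mem_filter]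
    exact ⟨Finset.mem_univ _, Finset.mem_univ _,
      ((insert z.1 (Finset.image z.2 Finset.univ)).orderEmbOfFin (hcard z hz)).strictMono⟩
  have hΨΦ : ∀ z ∈ A, Ψ (Φ z) = z := by
    intro z hz
    have hz' := hz
    rw [hA, Finset.mem_filter] at hz'
    obtain ⟨-, hmono, hne⟩ := hz'
    have hc := hcard z hz
    rw [hΦ]; simp only [dif_pos hc]
    set k : Fin (p + 1) :=
      ((insert z.1 (Finset.image z.2 Finset.univ)).orderIsoOfFin hc).symm
        ⟨z.1, Finset.mem_insert_self _ _⟩ with hk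
    have hJk : (insert z.1 (Finset.image z.2 Finset.univ)).orderEmbOfFin hc k = z.1 := by
      have h1 := Finset.coe_orderIsoOfFin_apply (insert z.1 (Finset.image z.2 Finset.univ)) hc k
      rw [← h1, hk, OrderIso.apply_symm_apply]
    have htail :
        (fun i => (insert z.1 (Finset.image z.2 Finset.univ)).orderEmbOfFin hc i) ∘ k.succAbove
          = z.2 := by
      apply strictMono_eq_of_mem (s := Finset.image z.2 Finset.univ)
        (by rw [Finset.card_image_of_injective _ hmono.injective, Finset.card_univ,
          Fintype.card_fin])
      · exact ((insert z.1 (Finset.image z.2 Finset.univ)).orderEmbOfFin hc).strictMono.comp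
          (Fin.strictMono_succAbove k)
      · exact hmono
      · intro x
        have hmem := Finset.orderEmbOfFin_mem (insert z.1 (Finset.image z.2 Finset.univ)) hc
          (k.succAbove x)
        rcases Finset.mem_insert.1 hmem with h1 | h1
        · exfalso
          refine Fin.succAbove_ne k x ?_
          exact ((insert z.1 (Finset.image z.2 Finset.univ)).orderEmbOfFin hc).injective
            (by rw [h1, hJk])
        · exact h1
      · intro x; exact Finset.mem_image_of_mem _ (Finset.mem_univ x)
    rw [hΨ]
    exact Prod.ext hJk htail
  have hΦΨ : ∀ z ∈ B, Φ (Ψ z) = z := by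
    rintro ⟨k, J⟩ hz
    have hzB : (k, J) ∈ B := hz
    rw [hB, Finset.mem_product, Finset.mem_filter] at hz
    obtain ⟨-, -, hJ⟩ := hz
    have hAmem := hΨA (k, J) hzB
    have hc := hcard _ hAmem
    rw [hΦ]
    simp only [hΨ] at hc ⊢
    rw [dif_pos hc]
    have hJs : ∀ x, J x ∈ insert ((J, k.succAbove).1 k)
        (Finset.image ((J, k.succAbove).1 ∘ (J, k.succAbove).2) Finset.univ) := by
      intro x
      rcases eq_or_ne x k with rfl | hx
      · exact Finset.mem_insert_self _ _
      · obtain ⟨y, hy⟩ := Fin.exists_succAbove_eq hx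
        refine Finset.mem_insert_of_mem ?_
        rw [← hy]
        exact Finset.mem_image_of_mem _ (Finset.mem_univ y)
    have hJeq : (fun i => (insert (J k) (Finset.image (J ∘ k.succAbove) Finset.univ)).orderEmbOfFin
        hc i) = J := by
      apply strictMono_eq_of_mem hc
      · exact ((insert (J k) (Finset.image (J ∘ k.succAbove) Finset.univ)).orderEmbOfFin
          hc).strictMono
      · exact hJ
      · intro x; exact Finset.orderEmbOfFin_mem _ _ _
      · intro x; exact hJs x
    have hkeq : ((insert (J k) (Finset.image (J ∘ k.succAbove) Finset.univ)).orderIsoOfFin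
        hc).symm ⟨J k, Finset.mem_insert_self _ _⟩ = k := by
      apply ((insert (J k) (Finset.image (J ∘ k.succAbove) Finset.univ)).orderIsoOfFin
        hc).injective
      rw [OrderIso.apply_symm_apply]
      apply Subtype.ext
      rw [Finset.coe_orderIsoOfFin_apply]
      exact (congrFun hJeq k).symm
    exact Prod.ext hkeq hJeq
  have hFG : ∀ w : Fin (p + 1) × (Fin (p + 1) → Fin n), F (Ψ w) = g w.2 := by
    rintro ⟨k, J⟩
    simp only [hΨ, hF, hg]
    rw [abs_sum_cons_eq u halt lam J k]
  have hval : ∀ z ∈ A, F z = g (Φ z).2 := by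
    intro z hz
    conv_lhs => rw [← hΨΦ z hz]
    exact hFG (Φ z)
  have h1 : (∑ z ∈ Finset.univ ×ˢ
        Finset.univ.filter (fun I : Fin p → Fin n => StrictMono I), F z)
      = ∑ l : Fin n, ∑ I ∈ Finset.univ.filter (fun I : Fin p → Fin n => StrictMono I),
          F (l, I) := by
    rw [Finset.sum_product]
  have h2 : (∑ z ∈ Finset.univ ×ˢ
        Finset.univ.filter (fun I : Fin p → Fin n => StrictMono I), F z)
      = ∑ z ∈ A, F z := by
    refine (Finset.sum_subset ?_ ?_).symm
    · intro z hz
      rw [hA, Finset.mem_filter] at hz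
      rw [Finset.mem_product]
      exact ⟨Finset.mem_univ _, Finset.mem_filter.2 ⟨Finset.mem_univ _, hz.2.1⟩⟩
    · intro z hz hnz
      rw [Finset.mem_product, Finset.mem_filter] at hz
      have hmono := hz.2.2
      have hex : ∃ i, z.2 i = z.1 := by
        by_contra hno
        push_neg at hno
        exact hnz (by rw [hA, Finset.mem_filter]; exact ⟨Finset.mem_univ _, hmono, hno⟩)
      obtain ⟨i, hi⟩ := hex
      have hz0 : ∀ j : Fin n, u (Fin.cons z.1 (Fin.cons j z.2)) = 0 := by
        intro j
        apply alt_eq_zero u halt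
        intro hinj
        have h0 : (Fin.cons z.1 (Fin.cons j z.2) : Fin (p + 2) → Fin n) 0
            = (Fin.cons z.1 (Fin.cons j z.2) : Fin (p + 2) → Fin n) i.succ.succ := by
          simp [hi]
        exact (Fin.succ_ne_zero _) (hinj h0).symm
      simp [hF, hz0]
  have h3 : (∑ z ∈ A, F z) = ∑ z ∈ B, g z.2 :=
    Finset.sum_nbij' Φ Ψ hΦB hΨA hΨΦ hΦΨ hval
  have h41 : (∑ z ∈ B, g z.2)
      = ∑ _k : Fin (p + 1),
          ∑ J ∈ Finset.univ.filter (fun J : Fin (p + 1) → Fin n => StrictMono J), g J :=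
    Finset.sum_product _ _ _
  have h4 : (∑ z ∈ B, g z.2)
      = ((p + 1 : ℕ) : ℝ) *
        ∑ J ∈ Finset.univ.filter (fun J : Fin (p + 1) → Fin n => StrictMono J), g J := by
    rw [h41, Finset.sum_const, Finset.card_univ, Fintype.card_fin, nsmul_eq_mul]
  rw [← h1, h2, h3, h4]

/-- Let `q ≥ 1`, `u : (Fin (q+1) → Fin n) → ℂ` alternating, and `lam : Fin n → ℂ`.  Then
`Σ_l Σ_{I : Fin (q-1) → Fin n strictly increasing} |Σ_j lam j · u (l :: j :: I)|²
  = q · Σ_{I : Fin q → Fin n strictly increasing} |Σ_j lam j · u (j :: I)|²`. -/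
theorem sum_sq_contraction_cons_alternating (n q : ℕ) (hq : 1 ≤ q)
    (u : (Fin (q + 1) → Fin n) → ℂ)
    (halt : ∀ (v : Fin (q + 1) → Fin n) (σ : Equiv.Perm (Fin (q + 1))),
      u (v ∘ σ) = ((Equiv.Perm.sign σ : ℤ) : ℂ) * u v)
    (lam : Fin n → ℂ) :
    ∑ l : Fin n,
        ∑ I ∈ Finset.univ.filter (fun I : Fin (q - 1) → Fin n => StrictMono I),
          ‖∑ j : Fin n, lam j *
            u ((Fin.cons l (Fin.cons j I)) ∘
              Fin.cast (show q + 1 = q - 1 + 1 + 1 by omega))‖ ^ 2 =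
      (q : ℝ) *
        ∑ I ∈ Finset.univ.filter (fun I : Fin q → Fin n => StrictMono I),
          ‖∑ j : Fin n, lam j * u (Fin.cons j I)‖ ^ 2 := by
  obtain ⟨p, rfl⟩ : ∃ p, q = p + 1 := ⟨q - 1, by omega⟩
  exact aux_contraction n p u halt lam
end
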